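/- arXiv:2504.17063 — 7 statements merged into one kernel-verified Lean document; each statement's English description precedes it below -/
import Mathlib

section
/- Fix matrices A ∈ ℝ^{ℓ×n} and B ∈ ℝ^{n×m}, and set N := 3n + m. Then the set D ⊆ ℝ^N × ℝ^N of all pairs of flows (v_Lf, F_Lf, v_R, v_ext) ∈ ℝ^n × ℝ^n × ℝ^n × ℝ^m and efforts (F_Le, v_Le, F_R, F_ext) ∈ ℝ^n × ℝ^n × ℝ^n × ℝ^m satisfying v_Lf = v_Le = v_R, A v_Le = 0, v_ext = Bᵀ v_Le, and ∃ μ ∈ ℝ^ℓ with F_Lf + F_Le + F_R + B F_ext + Aᵀ μ = 0, is a Dirac structure in ℝ^N × ℝ^N. -/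
open Matrix

/-- A subset `D ⊆ V × V` is a Dirac structure with respect to the bilinear pairing `pair`
(between flows and efforts) if membership in `D` is equivalent to being "orthogonal" to all
of `D` with respect to `(f,e),(f̂,ê) ↦ pair f̂ e + pair f ê`. -/
def IsDiracPair {V : Type*} (pair : V → V → ℝ) (D : Set (V × V)) : Prop :=
  ∀ p : V × V, p ∈ D ↔ ∀ q ∈ D, pair q.1 p.2 + pair p.1 q.2 = 0

/-- `ℝ^{3n+m}` split as `ℝ^n × ℝ^n × ℝ^n × ℝ^m`, the shape of both the flow vector
`(v_Lf, F_Lf, v_R, v_ext)` and the effort vector `(F_Le, v_Le, F_R, F_ext)`. -/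
abbrev Vnm (n m : ℕ) : Type :=
  (Fin n → ℝ) × (Fin n → ℝ) × (Fin n → ℝ) × (Fin m → ℝ)

/-- The componentwise Euclidean pairing on `ℝ^{3n+m} = ℝ^n × ℝ^n × ℝ^n × ℝ^m`. -/
def pairVnm {n m : ℕ} (f e : Vnm n m) : ℝ :=
  f.1 ⬝ᵥ e.1 + f.2.1 ⬝ᵥ e.2.1 + f.2.2.1 ⬝ᵥ e.2.2.1 + f.2.2.2 ⬝ᵥ e.2.2.2

/-- `(Mᵀ x) ⬝ y = x ⬝ (M y)`. -/
lemma dot_tA {a b : ℕ} (M : Matrix (Fin a) (Fin b) ℝ) (x : Fin a → ℝ) (y : Fin b → ℝ) :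
    (Mᵀ *ᵥ x) ⬝ᵥ y = x ⬝ᵥ (M *ᵥ y) := by
  rw [mulVec_transpose, ← dotProduct_mulVec]

/-- A vector orthogonal to the kernel of `A` lies in the range of `Aᵀ`. -/
lemma ker_orth_mem_range {ℓ n : ℕ} (A : Matrix (Fin ℓ) (Fin n) ℝ) (s : Fin n → ℝ)
    (h : ∀ w : Fin n → ℝ, A *ᵥ w = 0 → w ⬝ᵥ s = 0) :
    ∃ μ : Fin ℓ → ℝ, Aᵀ *ᵥ μ = s := by
  let T : EuclideanSpace ℝ (Fin ℓ) →ₗ[ℝ] EuclideanSpace ℝ (Fin n) :=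
    (WithLp.linearEquiv 2 ℝ (Fin n → ℝ)).symm.toLinearMap ∘ₗ Aᵀ.mulVecLin ∘ₗ
      (WithLp.linearEquiv 2 ℝ (Fin ℓ → ℝ)).toLinearMap
  have key : ∀ x : EuclideanSpace ℝ (Fin n), ∀ y : EuclideanSpace ℝ (Fin n),
      (inner ℝ x y : ℝ) = x.ofLp ⬝ᵥ y.ofLp := by
    intro x y
    simp [PiLp.inner_apply, RCLike.inner_apply, dotProduct, mul_comm]
  have hs : WithLp.toLp 2 s ∈ (LinearMap.range T)ᗮᗮ := by
    intro v hv
    have hAv : A *ᵥ v.ofLp = 0 := by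
      have h1 := hv (T (WithLp.toLp 2 (A *ᵥ v.ofLp))) ⟨_, rfl⟩
      rw [key] at h1
      change (Aᵀ *ᵥ (A *ᵥ v.ofLp)) ⬝ᵥ v.ofLp = 0 at h1
      have : (A *ᵥ v.ofLp) ⬝ᵥ (A *ᵥ v.ofLp) = 0 := by
        rw [← dot_tA]; exact h1
      exact dotProduct_self_eq_zero.mp this
    rw [key]
    exact h v.ofLp hAv
  rw [Submodule.orthogonal_orthogonal] at hs
  obtain ⟨μ, hμ⟩ := hs
  exact ⟨μ.ofLp, congrArg WithLp.ofLp hμ⟩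

/-- The set of pairs of flows `(v_Lf, F_Lf, v_R, v_ext)` and efforts `(F_Le, v_Le, F_R, F_ext)`
with `v_Lf = v_Le = v_R`, `A v_Le = 0`, `v_ext = Bᵀ v_Le` and
`F_Lf + F_Le + F_R + B F_ext + Aᵀ μ = 0` for some `μ ∈ ℝ^ℓ` is a Dirac structure
in `ℝ^{3n+m} × ℝ^{3n+m}`. -/
theorem mechanical_isDirac {n m ℓ : ℕ}
    (A : Matrix (Fin ℓ) (Fin n) ℝ) (B : Matrix (Fin n) (Fin m) ℝ) :
    IsDiracPair pairVnm
      {p : Vnm n m × Vnm n m |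
        p.1.1 = p.2.2.1 ∧ p.1.2.2.1 = p.2.2.1 ∧
        A *ᵥ p.2.2.1 = 0 ∧
        p.1.2.2.2 = Bᵀ *ᵥ p.2.2.1 ∧
        ∃ μ : Fin ℓ → ℝ,
          p.1.2.1 + p.2.1 + p.2.2.2.1 + B *ᵥ p.2.2.2.2 + Aᵀ *ᵥ μ = 0} := by
  rintro ⟨⟨vLf, FLf, vR, vext⟩, FLe, vLe, FR, Fext⟩
  constructor
  · -- forward direction
    rintro ⟨h1, h2, h3, h4, μ, h5⟩ ⟨⟨wLf, GLf, wR, wext⟩, GLe, wLe, GR, Gext⟩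
      ⟨g1, g2, g3, g4, ν, g5⟩
    simp only at h1 h2 h3 h4 h5 g1 g2 g3 g4 g5
    rw [show ((⟨⟨vLf, FLf, vR, vext⟩, FLe, vLe, FR, Fext⟩ :
        Vnm n m × Vnm n m)).1 = (vLf, FLf, vR, vext) from rfl] at *
    simp only [pairVnm]
    rw [g1, g2, g4, h1, h2, h4]
    have H1 := congrArg (· ⬝ᵥ wLe) h5
    have H2 := congrArg (· ⬝ᵥ vLe) g5
    simp only [add_dotProduct, zero_dotProduct, dot_tA, g3, h3, dotProduct_zero,
      add_zero] at H1 H2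
    rw [dot_tA, dot_tA]
    linarith [H1, H2, dotProduct_comm wLe FLe, dotProduct_comm vLe GLf,
      dotProduct_comm wLe FR, dotProduct_comm vLe GLe, dotProduct_comm wLe FLf,
      dotProduct_comm vLe GR, dotProduct_comm vLe (B *ᵥ Gext),
      dotProduct_comm wLe (B *ᵥ Fext)]
  · -- backward direction
    intro h
    have e1 : vLf = vLe := by
      set x : Fin n → ℝ := vLf - vLe with hxdef
      have hx := h ((0, -x, 0, 0), (x, 0, 0, 0))
        ⟨rfl, rfl, by simp, by simp, 0, by simp⟩
      simp only [pairVnm, zero_dotProduct, dotProduct_zero, neg_dotProduct,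
        add_zero, zero_add] at hx
      have hz : x ⬝ᵥ x = 0 := by
        rw [hxdef, sub_dotProduct]
        linarith [hx, dotProduct_comm vLe x]
      have := dotProduct_self_eq_zero.mp hz
      rwa [hxdef, sub_eq_zero] at this
    have e2 : vR = vLe := by
      set x : Fin n → ℝ := vR - vLe with hxdef
      have hx := h ((0, -x, 0, 0), (0, 0, x, 0))
        ⟨rfl, rfl, by simp, by simp, 0, by simp⟩
      simp only [pairVnm, zero_dotProduct, dotProduct_zero, neg_dotProduct,
        add_zero, zero_add] at hx
      have hz : x ⬝ᵥ x = 0 := by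
        rw [hxdef, sub_dotProduct]
        linarith [hx, dotProduct_comm vLe x]
      have := dotProduct_self_eq_zero.mp hz
      rwa [hxdef, sub_eq_zero] at this
    have e4 : vext = Bᵀ *ᵥ vLe := by
      set x : Fin m → ℝ := vext - Bᵀ *ᵥ vLe with hxdef
      have hx := h ((0, -(B *ᵥ x), 0, 0), (0, 0, 0, x))
        ⟨rfl, rfl, by simp, by simp, 0, by simp⟩
      simp only [pairVnm, zero_dotProduct, dotProduct_zero, neg_dotProduct,
        add_zero, zero_add] at hx
      have hz : x ⬝ᵥ x = 0 := by
        rw [hxdef, sub_dotProduct]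
        linarith [hx, dot_tA B vLe x, dotProduct_comm vLe (B *ᵥ x)]
      have := dotProduct_self_eq_zero.mp hz
      rwa [hxdef, sub_eq_zero] at this
    have e3 : A *ᵥ vLe = 0 := by
      set ν : Fin ℓ → ℝ := A *ᵥ vLe with hνdef
      have hx := h ((0, -(Aᵀ *ᵥ ν), 0, 0), (0, 0, 0, 0))
        ⟨rfl, rfl, by simp, by simp, ν, by simp⟩
      simp only [pairVnm, zero_dotProduct, dotProduct_zero, neg_dotProduct,
        add_zero, zero_add] at hx
      have hz : ν ⬝ᵥ ν = 0 := by
        rw [hνdef]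
        nth_rewrite 1 [← dot_tA A ν vLe]  -- goal manipulation
        linarith [hx]
      exact dotProduct_self_eq_zero.mp hz
    have hker : ∀ w : Fin n → ℝ, A *ᵥ w = 0 →
        w ⬝ᵥ (FLf + FLe + FR + B *ᵥ Fext) = 0 := by
      intro w hw
      have hx := h ((w, 0, w, Bᵀ *ᵥ w), (0, w, 0, 0))
        ⟨rfl, rfl, hw, rfl, 0, by simp⟩
      simp only [pairVnm, zero_dotProduct, dotProduct_zero, add_zero, zero_add] at hx
      simp only [dotProduct_add]
      linarith [hx, dotProduct_comm w FLf, dot_tA B w Fext,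
        dotProduct_comm w FLe, dotProduct_comm w FR]
    obtain ⟨ν, hν⟩ := ker_orth_mem_range A (FLf + FLe + FR + B *ᵥ Fext) hker
    refine ⟨e1, e2, e3, e4, -ν, ?_⟩
    rw [Matrix.mulVec_neg, hν]
    abel
end

section
/- Fix matrices Z ∈ ℝ^{p×q}, G ∈ ℝ^{q×q} with Gᵀ = −G, A ∈ ℝ^{ℓ×q} and B ∈ ℝ^{q×m}, and set N := p + 2q + m. Then the set D ⊆ ℝ^N × ℝ^N of all pairs of flows (ϖ_Lf, τ_Lf, ϖ_R, ϖ_ext) ∈ ℝ^p × ℝ^q × ℝ^q × ℝ^m and efforts (τ_Le, ϖ_Le, τ_R, τ_ext) ∈ ℝ^p × ℝ^q × ℝ^q × ℝ^m satisfying ϖ_Lf = Z ϖ_Le, ϖ_R = ϖ_Le, A ϖ_Le = 0, ϖ_ext = Bᵀ ϖ_Le, and ∃ μ ∈ ℝ^ℓ with τ_Lf + Zᵀ τ_Le + G ϖ_Le + τ_R + B τ_ext + Aᵀ μ = 0, is a Dirac structure in ℝ^N × ℝ^N. -/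
open Matrix

/-- `ℝ^{p+2q+m}` split as `ℝ^p × ℝ^q × ℝ^q × ℝ^m`, the shape of both the flow vector
`(ϖ_Lf, τ_Lf, ϖ_R, ϖ_ext)` and the effort vector `(τ_Le, ϖ_Le, τ_R, τ_ext)`. -/
abbrev Vpqm (p q m : ℕ) : Type :=
  (Fin p → ℝ) × (Fin q → ℝ) × (Fin q → ℝ) × (Fin m → ℝ)

/-- The componentwise Euclidean pairing on `ℝ^{p+2q+m} = ℝ^p × ℝ^q × ℝ^q × ℝ^m`. -/
def pairVpqm {p q m : ℕ} (f e : Vpqm p q m) : ℝ :=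
  f.1 ⬝ᵥ e.1 + f.2.1 ⬝ᵥ e.2.1 + f.2.2.1 ⬝ᵥ e.2.2.1 + f.2.2.2 ⬝ᵥ e.2.2.2

lemma dp_swap {a b : ℕ} (M : Matrix (Fin a) (Fin b) ℝ) (u : Fin b → ℝ) (v : Fin a → ℝ) :
    (M *ᵥ u) ⬝ᵥ v = u ⬝ᵥ (Mᵀ *ᵥ v) := by
  rw [dotProduct_comm, Matrix.dotProduct_mulVec, ← Matrix.mulVec_transpose,
    dotProduct_comm]

lemma eq_of_forall_dot {n : ℕ} (v w : Fin n → ℝ) (h : ∀ a : Fin n → ℝ, a ⬝ᵥ (v - w) = 0) :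
    v = w := by
  have := h (v - w)
  rw [dotProduct_self_eq_zero] at this
  exact sub_eq_zero.mp this

lemma mem_range_transpose {ℓ q : ℕ} (A : Matrix (Fin ℓ) (Fin q) ℝ) (v : Fin q → ℝ)
    (h : ∀ w : Fin q → ℝ, A *ᵥ w = 0 → w ⬝ᵥ v = 0) : ∃ μ : Fin ℓ → ℝ, Aᵀ *ᵥ μ = v := by
  classical
  set K : Submodule ℝ (EuclideanSpace ℝ (Fin q)) :=
    LinearMap.range (Matrix.toEuclideanLin Aᵀ) with hK
  have hv : ((WithLp.equiv 2 (Fin q → ℝ)).symm v) ∈ Kᗮᗮ := by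
    rw [Submodule.mem_orthogonal]
    intro w hw
    have hAw : A *ᵥ (WithLp.equiv 2 (Fin q → ℝ)) w = 0 := by
      have := (Submodule.mem_orthogonal K w).mp hw
        (Matrix.toEuclideanLin Aᵀ ((WithLp.equiv 2 (Fin ℓ → ℝ)).symm
          (A *ᵥ (WithLp.equiv 2 (Fin q → ℝ)) w)))
        (LinearMap.mem_range_self _ _)
      rw [Matrix.toEuclideanLin_apply] at this
      simp only [PiLp.inner_apply, RCLike.inner_apply, conj_trivial] at this
      have h2 : (Aᵀ *ᵥ (A *ᵥ (WithLp.equiv 2 (Fin q → ℝ)) w)) ⬝ᵥ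
          ((WithLp.equiv 2 (Fin q → ℝ)) w) = 0 := by rw [dotProduct_comm]; exact this
      rw [dp_swap, Matrix.transpose_transpose, dotProduct_comm,
        dotProduct_self_eq_zero] at h2
      exact h2
    have := h _ hAw
    rw [PiLp.inner_apply]
    simpa [dotProduct, mul_comm] using this
  rw [Submodule.orthogonal_orthogonal] at hv
  obtain ⟨μ, hμ⟩ := hv
  exact ⟨(WithLp.equiv 2 (Fin ℓ → ℝ)) μ, congrArg (WithLp.equiv 2 (Fin q → ℝ)) hμ⟩

/-- For `Z ∈ ℝ^{p×q}`, skew-symmetric `G ∈ ℝ^{q×q}`, `A ∈ ℝ^{ℓ×q}`, `B ∈ ℝ^{q×m}`, the set of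
pairs of flows `(ϖ_Lf, τ_Lf, ϖ_R, ϖ_ext)` and efforts `(τ_Le, ϖ_Le, τ_R, τ_ext)` satisfying
`ϖ_Lf = Z ϖ_Le`, `ϖ_R = ϖ_Le`, `A ϖ_Le = 0`, `ϖ_ext = Bᵀ ϖ_Le` and
`τ_Lf + Zᵀ τ_Le + G ϖ_Le + τ_R + B τ_ext + Aᵀ μ = 0` for some `μ ∈ ℝ^ℓ`, is a Dirac
structure in `ℝ^{p+2q+m} × ℝ^{p+2q+m}`. -/
theorem multibody_isDirac {p q m ℓ : ℕ}
    (Z : Matrix (Fin p) (Fin q) ℝ) (G : Matrix (Fin q) (Fin q) ℝ) (hG : Gᵀ = -G)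
    (A : Matrix (Fin ℓ) (Fin q) ℝ) (B : Matrix (Fin q) (Fin m) ℝ) :
    IsDiracPair pairVpqm
      {x : Vpqm p q m × Vpqm p q m |
        x.1.1 = Z *ᵥ x.2.2.1 ∧ x.1.2.2.1 = x.2.2.1 ∧
        A *ᵥ x.2.2.1 = 0 ∧
        x.1.2.2.2 = Bᵀ *ᵥ x.2.2.1 ∧
        ∃ μ : Fin ℓ → ℝ,
          x.1.2.1 + Zᵀ *ᵥ x.2.1 + G *ᵥ x.2.2.1 + x.2.2.2.1 + B *ᵥ x.2.2.2.2
            + Aᵀ *ᵥ μ = 0} := by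
  intro x
  constructor
  · rintro ⟨h1, h3, hA, h4, μ, hμ⟩ y ⟨g1, g3, gA, g4, ν, hν⟩
    have c1 := congrArg (fun v => v ⬝ᵥ y.2.2.1) hμ
    have c2 := congrArg (fun v => v ⬝ᵥ x.2.2.1) hν
    simp only [add_dotProduct, zero_dotProduct] at c1 c2
    have a1 : (Z *ᵥ y.2.2.1) ⬝ᵥ x.2.1 = (Zᵀ *ᵥ x.2.1) ⬝ᵥ y.2.2.1 := by
      rw [dp_swap, dotProduct_comm]
    have a2 : (Z *ᵥ x.2.2.1) ⬝ᵥ y.2.1 = (Zᵀ *ᵥ y.2.1) ⬝ᵥ x.2.2.1 := by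
      rw [dp_swap, dotProduct_comm]
    have a3 : (G *ᵥ x.2.2.1) ⬝ᵥ y.2.2.1 = -((G *ᵥ y.2.2.1) ⬝ᵥ x.2.2.1) := by
      rw [dp_swap, hG, Matrix.neg_mulVec, dotProduct_neg, dotProduct_comm]
    have a4 : (Bᵀ *ᵥ y.2.2.1) ⬝ᵥ x.2.2.2.2 = (B *ᵥ x.2.2.2.2) ⬝ᵥ y.2.2.1 := by
      rw [dp_swap, Matrix.transpose_transpose, dotProduct_comm]
    have a5 : (Bᵀ *ᵥ x.2.2.1) ⬝ᵥ y.2.2.2.2 = (B *ᵥ y.2.2.2.2) ⬝ᵥ x.2.2.1 := by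
      rw [dp_swap, Matrix.transpose_transpose, dotProduct_comm]
    have a6 : (Aᵀ *ᵥ μ) ⬝ᵥ y.2.2.1 = 0 := by
      rw [dp_swap, Matrix.transpose_transpose, gA, dotProduct_zero]
    have a7 : (Aᵀ *ᵥ ν) ⬝ᵥ x.2.2.1 = 0 := by
      rw [dp_swap, Matrix.transpose_transpose, hA, dotProduct_zero]
    have a8 : y.2.2.1 ⬝ᵥ x.2.2.2.1 = x.2.2.2.1 ⬝ᵥ y.2.2.1 := dotProduct_comm _ _
    have a9 : x.2.2.1 ⬝ᵥ y.2.2.2.1 = y.2.2.2.1 ⬝ᵥ x.2.2.1 := dotProduct_comm _ _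
    simp only [pairVpqm]
    rw [h1, h3, h4, g1, g3, g4]
    linear_combination c1 + c2 + a1 + a2 - a3 + a4 + a5 - a6 - a7 + a8 + a9
  · intro H
    -- ϖ_Lf = Z ϖ_Le
    have e1 : x.1.1 = Z *ᵥ x.2.2.1 := by
      apply eq_of_forall_dot
      intro a
      have h := H ((0, -(Zᵀ *ᵥ a), 0, 0), (a, 0, 0, 0))
        ⟨by simp, by simp, by simp, by simp, ⟨0, by simp⟩⟩
      simp only [pairVpqm, zero_dotProduct, dotProduct_zero,
        neg_dotProduct] at h
      have hz : (Zᵀ *ᵥ a) ⬝ᵥ x.2.2.1 = a ⬝ᵥ (Z *ᵥ x.2.2.1) := by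
        rw [dp_swap, Matrix.transpose_transpose]
      have hc : x.1.1 ⬝ᵥ a = a ⬝ᵥ x.1.1 := dotProduct_comm _ _
      rw [dotProduct_sub]
      linear_combination h + hz - hc
    -- ϖ_R = ϖ_Le
    have e3 : x.1.2.2.1 = x.2.2.1 := by
      apply eq_of_forall_dot
      intro c
      have h := H ((0, -c, 0, 0), (0, 0, c, 0))
        ⟨by simp, by simp, by simp, by simp, ⟨0, by simp⟩⟩
      simp only [pairVpqm, zero_dotProduct, dotProduct_zero,
        neg_dotProduct] at h
      have hc1 : x.1.2.2.1 ⬝ᵥ c = c ⬝ᵥ x.1.2.2.1 := dotProduct_comm _ _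
      have hc2 : c ⬝ᵥ x.2.2.1 = x.2.2.1 ⬝ᵥ c := dotProduct_comm _ _
      rw [dotProduct_sub]
      linear_combination h - hc1
    -- A ϖ_Le = 0
    have eA : A *ᵥ x.2.2.1 = 0 := by
      have h0 : ∀ μ' : Fin ℓ → ℝ, μ' ⬝ᵥ (A *ᵥ x.2.2.1 - 0) = 0 := by
        intro μ'
        have h := H ((0, -(Aᵀ *ᵥ μ'), 0, 0), (0, 0, 0, 0))
          ⟨by simp, by simp, by simp, by simp, ⟨μ', by simp⟩⟩
        simp only [pairVpqm, zero_dotProduct, dotProduct_zero,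
          neg_dotProduct] at h
        have hz : (Aᵀ *ᵥ μ') ⬝ᵥ x.2.2.1 = μ' ⬝ᵥ (A *ᵥ x.2.2.1) := by
          rw [dp_swap, Matrix.transpose_transpose]
        rw [dotProduct_sub, dotProduct_zero]
        linear_combination -h - hz
      exact eq_of_forall_dot _ _ h0
    -- ϖ_ext = Bᵀ ϖ_Le
    have e4 : x.1.2.2.2 = Bᵀ *ᵥ x.2.2.1 := by
      apply eq_of_forall_dot
      intro d
      have h := H ((0, -(B *ᵥ d), 0, 0), (0, 0, 0, d))
        ⟨by simp, by simp, by simp, by simp, ⟨0, by simp⟩⟩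
      simp only [pairVpqm, zero_dotProduct, dotProduct_zero,
        neg_dotProduct] at h
      have hz : (B *ᵥ d) ⬝ᵥ x.2.2.1 = d ⬝ᵥ (Bᵀ *ᵥ x.2.2.1) := dp_swap _ _ _
      have hc : x.1.2.2.2 ⬝ᵥ d = d ⬝ᵥ x.1.2.2.2 := dotProduct_comm _ _
      rw [dotProduct_sub]
      linear_combination h + hz - hc
    -- the torque-balance equation
    have key : ∀ w : Fin q → ℝ, A *ᵥ w = 0 →
        w ⬝ᵥ (x.1.2.1 + Zᵀ *ᵥ x.2.1 + G *ᵥ x.2.2.1 + x.2.2.2.1 + B *ᵥ x.2.2.2.2) = 0 := by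
      intro w hw
      have h := H ((Z *ᵥ w, -(G *ᵥ w), w, Bᵀ *ᵥ w), (0, w, 0, 0))
        ⟨rfl, rfl, hw, rfl, ⟨0, by simp⟩⟩
      simp only [pairVpqm, zero_dotProduct, dotProduct_zero,
        neg_dotProduct] at h
      have hz1 : (Z *ᵥ w) ⬝ᵥ x.2.1 = w ⬝ᵥ (Zᵀ *ᵥ x.2.1) := dp_swap _ _ _
      have hz2 : (G *ᵥ w) ⬝ᵥ x.2.2.1 = -(w ⬝ᵥ (G *ᵥ x.2.2.1)) := by
        rw [dp_swap, hG, Matrix.neg_mulVec, dotProduct_neg]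
      have hz3 : (Bᵀ *ᵥ w) ⬝ᵥ x.2.2.2.2 = w ⬝ᵥ (B *ᵥ x.2.2.2.2) := by
        rw [dp_swap, Matrix.transpose_transpose]
      have hc1 : x.1.2.1 ⬝ᵥ w = w ⬝ᵥ x.1.2.1 := dotProduct_comm _ _
      have hc2 : w ⬝ᵥ x.2.2.2.1 = w ⬝ᵥ x.2.2.2.1 := rfl
      simp only [dotProduct_add]
      linear_combination h - hz1 + hz2 - hz3 - hc1
    obtain ⟨μ, hμ⟩ := mem_range_transpose A
      (-(x.1.2.1 + Zᵀ *ᵥ x.2.1 + G *ᵥ x.2.2.1 + x.2.2.2.1 + B *ᵥ x.2.2.2.2))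
      (fun w hw => by rw [dotProduct_neg, key w hw, neg_zero])
    exact ⟨e1, e3, eA, e4, ⟨μ, by rw [hμ]; abel⟩⟩
end

section
/- Let U_pos ⊆ ℝ^{n_pot} be open, let A : U_pos → ℝ^{ℓ×n_kin}, B : U_pos → ℝ^{n_kin×m}, G : ℝ^{n_kin} → ℝ^{n_kin×n_kin}, Z : U_pos → ℝ^{n_pot×n_kin} be continuous, assume A has constant rank on U_pos, and assume G(Γ) is skew-symmetric for every Γ ∈ ℝ^{n_kin}. For (ζ,Γ) ∈ U_pos × ℝ^{n_kin} and N := n_pot + 2 n_kin + m, let D_{(ζ,Γ)} ⊆ ℝ^N × ℝ^N be the set of all pairs of flows (ϖ_Lf, τ_Lf, ϖ_R, ϖ_ext) and efforts (τ_Le, ϖ_Le, τ_R, τ_ext) with ϖ_Lf = Z(ζ) ϖ_Le, ϖ_R = ϖ_Le, A(ζ) ϖ_Le = 0, ϖ_ext = B(ζ)ᵀ ϖ_Le, and ∃ μ ∈ ℝ^ℓ with τ_Lf + Z(ζ)ᵀ τ_Le + G(Γ) ϖ_Le + τ_R + B(ζ) τ_ext + A(ζ)ᵀ μ = 0. Then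 the family (D_{(ζ,Γ)})_{(ζ,Γ) ∈ U_pos × ℝ^{n_kin}} is a modulated Dirac structure. -/
open Matrix

/-- A family `(D x)_{x ∈ U}` of subsets of `V × V` is a modulated Dirac structure if each
`D x` is a Dirac structure and around each `x ∈ U` there is a neighborhood `Ux ⊆ U` on which
the family admits a continuous local trivialization by injective linear maps
`T y : W → V × V` (where `W ≅ ℝ^N`) with range `D y`. -/
def IsModulatedDirac (W : Type*) [AddCommGroup W] [Module ℝ W]
    {X V : Type*} [TopologicalSpace X] [TopologicalSpace V] [AddCommGroup V] [Module ℝ V]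
    (pair : V → V → ℝ) (U : Set X) (D : X → Set (V × V)) : Prop :=
  (∀ x ∈ U, IsDiracPair pair (D x)) ∧
  ∀ x ∈ U, ∃ Ux : Set X, IsOpen Ux ∧ x ∈ Ux ∧ Ux ⊆ U ∧
    ∃ T : X → (W →ₗ[ℝ] V × V),
      (∀ y ∈ Ux, Function.Injective (T y) ∧ Set.range (T y) = D y) ∧
      ∀ z : W, ContinuousOn (fun y => T y z) Ux

namespace MultibodyDirac

open Module

section Helpers

lemma dp_swap {a b : ℕ} (M : Matrix (Fin a) (Fin b) ℝ) (x : Fin b → ℝ) (y : Fin a → ℝ) :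
    (M *ᵥ x) ⬝ᵥ y = x ⬝ᵥ (Mᵀ *ᵥ y) := by
  rw [dotProduct_mulVec, vecMul_transpose, dotProduct_comm]

lemma dp_self_nonneg {a : ℕ} (v : Fin a → ℝ) : 0 ≤ v ⬝ᵥ v :=
  Finset.sum_nonneg (fun _ _ => mul_self_nonneg _)

lemma mat_eq_of_mulVec {a b : ℕ} {M N : Matrix (Fin a) (Fin b) ℝ}
    (h : ∀ v, M *ᵥ v = N *ᵥ v) : M = N := by
  ext i j
  have := congrFun (h (Pi.single j 1)) i
  simpa [Matrix.mulVec_single] using this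

lemma inner_eq_dp {a : ℕ} (x y : EuclideanSpace ℝ (Fin a)) :
    (inner ℝ x y : ℝ) = (WithLp.equiv 2 _ x) ⬝ᵥ (WithLp.equiv 2 _ y) := by
  simp [PiLp.inner_apply, RCLike.inner_apply, dotProduct, WithLp.equiv, Equiv.refl_apply]
  exact Finset.sum_congr rfl (fun i _ => mul_comm _ _)

lemma exists_proj {a : ℕ} (S : Submodule ℝ (Fin a → ℝ)) :
    ∃ P : Matrix (Fin a) (Fin a) ℝ, Pᵀ = P ∧ P * P = P ∧ (∀ v, P *ᵥ v ∈ S) ∧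
      (∀ v ∈ S, P *ᵥ v = v) := by
  classical
  set e := WithLp.linearEquiv 2 ℝ (Fin a → ℝ)
  set S' : Submodule ℝ (EuclideanSpace ℝ (Fin a)) := S.comap e.toLinearMap with hS'
  have hfd : FiniteDimensional ℝ (EuclideanSpace ℝ (Fin a)) := by infer_instance
  set r := finrank ℝ S'
  set b := stdOrthonormalBasis ℝ S'
  set u : Fin r → (Fin a → ℝ) := fun j => e ((b j : EuclideanSpace ℝ (Fin a))) with hu
  have humem : ∀ j, u j ∈ S := fun j => (b j).2
  have hinner : ∀ (x y : S'), (inner ℝ x y : ℝ)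
      = e (x : EuclideanSpace ℝ (Fin a)) ⬝ᵥ e (y : EuclideanSpace ℝ (Fin a)) := by
    intro x y
    rw [Submodule.coe_inner, inner_eq_dp]
    rfl
  have huorth : ∀ j k, u j ⬝ᵥ u k = if j = k then (1:ℝ) else 0 := by
    intro j k
    rw [← hinner]
    have := orthonormal_iff_ite.mp b.orthonormal j k
    simp [this]
  set C : Matrix (Fin a) (Fin r) ℝ := Matrix.of (fun i j => u j i) with hC
  have hCtC : Cᵀ * C = 1 := by
    ext j k
    have := huorth j k
    simpa [Matrix.mul_apply, Matrix.one_apply, dotProduct, hC] using this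
  have hCv : ∀ x : Fin r → ℝ, C *ᵥ x = ∑ j, x j • u j := by
    intro x
    funext i
    simp [Matrix.mulVec, dotProduct, hC, Finset.sum_apply, mul_comm]
  have hCmem : ∀ x, C *ᵥ x ∈ S := by
    intro x
    rw [hCv]
    exact Submodule.sum_mem _ (fun j _ => Submodule.smul_mem _ _ (humem j))
  have hCt : ∀ v : Fin a → ℝ, Cᵀ *ᵥ v = fun j => u j ⬝ᵥ v := by
    intro v; funext j; simp [Matrix.mulVec, dotProduct, hC]
  refine ⟨C * Cᵀ, ?_, ?_, ?_, ?_⟩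
  · simp [Matrix.transpose_mul]
  · rw [Matrix.mul_assoc, ← Matrix.mul_assoc Cᵀ C, hCtC, Matrix.one_mul]
  · intro v
    rw [← Matrix.mulVec_mulVec]
    exact hCmem _
  · intro v hv
    have hv' : e.symm v ∈ S' := by
      simp only [hS', Submodule.mem_comap]
      simpa using hv
    set w : S' := ⟨e.symm v, hv'⟩ with hw
    have hrepr := b.sum_repr w
    have happ : ∀ j, b.repr w j = u j ⬝ᵥ v := by
      intro j
      rw [b.repr_apply_apply, hinner]
      have : e (w : EuclideanSpace ℝ (Fin a)) = v := by simp [hw]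
      rw [this]
    have := congrArg (fun z : S' => e (z : EuclideanSpace ℝ (Fin a))) hrepr
    simp only at this
    have hL : e ((↑(∑ j, b.repr w j • b j) : EuclideanSpace ℝ (Fin a)))
        = ∑ j, b.repr w j • u j := by
      push_cast
      rw [map_sum]
      simp [hu]
    rw [hL] at this
    have hR : e ((w : EuclideanSpace ℝ (Fin a))) = v := by simp [hw]
    rw [hR] at this
    rw [← Matrix.mulVec_mulVec, hCt, hCv]
    calc (∑ j, (u j ⬝ᵥ v) • u j) = ∑ j, b.repr w j • u j := by simp_rw [happ]; rfl
      _ = v := this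

lemma mem_range_transpose {l a : ℕ} (A : Matrix (Fin l) (Fin a) ℝ) (w : Fin a → ℝ)
    (h : ∀ v, A *ᵥ v = 0 → w ⬝ᵥ v = 0) : ∃ μ, w = Aᵀ *ᵥ μ := by
  classical
  set e := WithLp.linearEquiv 2 ℝ (Fin a → ℝ)
  set R' : Submodule ℝ (EuclideanSpace ℝ (Fin a)) :=
    (LinearMap.range (Aᵀ).mulVecLin).comap e.toLinearMap with hR'
  set K' : Submodule ℝ (EuclideanSpace ℝ (Fin a)) :=
    (LinearMap.ker A.mulVecLin).comap e.toLinearMap with hK'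
  have hRK : R'ᗮ = K' := by
    ext x
    simp only [Submodule.mem_orthogonal, hR', hK', Submodule.mem_comap, LinearMap.mem_ker,
      LinearMap.mem_range, Matrix.mulVecLin_apply]
    constructor
    · intro hx
      have h1 : ∀ μ, (Aᵀ *ᵥ μ) ⬝ᵥ (e x) = 0 := by
        intro μ
        have := hx (e.symm (Aᵀ *ᵥ μ)) ⟨μ, by simp⟩
        rw [inner_eq_dp] at this
        exact this
      have h2 : ∀ μ, μ ⬝ᵥ (A *ᵥ (e x)) = 0 := by
        intro μ
        have := h1 μ
        rwa [dp_swap, transpose_transpose, dotProduct_mulVec, ← dotProduct_mulVec] at this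
      have := h2 (A *ᵥ (e x))
      rwa [dotProduct_self_eq_zero] at this
    · intro hx u hu
      obtain ⟨μ, hμ⟩ := hu
      rw [inner_eq_dp]
      show (e u) ⬝ᵥ (e x) = 0
      have hx' : A *ᵥ (e x) = 0 := hx
      rw [show ((e u : Fin a → ℝ)) = Aᵀ *ᵥ μ from hμ.symm, dp_swap, transpose_transpose, hx',
        dotProduct_zero]
  have hww : e.symm w ∈ K'ᗮ := by
    intro u hu
    rw [inner_eq_dp]
    show (e u) ⬝ᵥ w = 0
    rw [dotProduct_comm]
    exact h _ hu
  rw [← hRK, Submodule.orthogonal_orthogonal] at hww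
  obtain ⟨μ, hμ⟩ := hww
  refine ⟨μ, ?_⟩
  have : Aᵀ *ᵥ μ = e (e.symm w) := hμ
  simpa using this.symm

end Helpers

section Dirac

variable {p q mm l : ℕ} (Zm : Matrix (Fin p) (Fin q) ℝ) (Am : Matrix (Fin l) (Fin q) ℝ)
  (Bm : Matrix (Fin q) (Fin mm) ℝ) (Gm : Matrix (Fin q) (Fin q) ℝ)

def Dset : Set (Vpqm p q mm × Vpqm p q mm) :=
  {x | x.1.1 = Zm *ᵥ x.2.2.1 ∧ x.1.2.2.1 = x.2.2.1 ∧ Am *ᵥ x.2.2.1 = 0 ∧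
    x.1.2.2.2 = Bmᵀ *ᵥ x.2.2.1 ∧
    ∃ μ : Fin l → ℝ,
      x.1.2.1 + Zmᵀ *ᵥ x.2.1 + Gm *ᵥ x.2.2.1 + x.2.2.2.1 + Bm *ᵥ x.2.2.2.2 + Amᵀ *ᵥ μ = 0}

lemma mem_test (d1 : Fin p → ℝ) (d2 : Fin q → ℝ) (d3 : Fin q → ℝ) (d4 : Fin mm → ℝ)
    (ν : Fin l → ℝ) (h : Am *ᵥ d2 = 0) :
    ((Zm *ᵥ d2, -(Zmᵀ *ᵥ d1 + Gm *ᵥ d2 + d3 + Bm *ᵥ d4 + Amᵀ *ᵥ ν), d2, Bmᵀ *ᵥ d2),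
      (d1, d2, d3, d4)) ∈ Dset Zm Am Bm Gm :=
  ⟨rfl, rfl, h, rfl, ⟨ν, by dsimp only; abel⟩⟩

lemma isDirac (hskew : Gmᵀ = -Gm) : IsDiracPair pairVpqm (Dset Zm Am Bm Gm) := by
  rintro ⟨⟨f1, f2, f3, f4⟩, e1, e2, e3, e4⟩
  constructor
  · intro hp qq hq
    obtain ⟨⟨g1, g2, g3, g4⟩, d1, d2, d3, d4⟩ := qq
    obtain ⟨h1, h2, h3, h4, μ, h5⟩ := hp
    obtain ⟨k1, k2, k3, k4, ν, k5⟩ := hq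
    dsimp only [Dset, Set.mem_setOf_eq] at h1 h2 h3 h4 h5 k1 k2 k3 k4 k5 ⊢
    simp only [pairVpqm]
    rw [h1, h2, h4, k1, k2, k4]
    have H5 := congrArg (fun v => d2 ⬝ᵥ v) h5
    have K5 := congrArg (fun v => e2 ⬝ᵥ v) k5
    simp only [dotProduct_add, dotProduct_zero] at H5 K5
    have a1 : (Zm *ᵥ d2) ⬝ᵥ e1 = d2 ⬝ᵥ (Zmᵀ *ᵥ e1) := dp_swap _ _ _
    have a2 : g2 ⬝ᵥ e2 = e2 ⬝ᵥ g2 := dotProduct_comm _ _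
    have a3 : (Bmᵀ *ᵥ d2) ⬝ᵥ e4 = d2 ⬝ᵥ (Bm *ᵥ e4) := by
      rw [dp_swap, transpose_transpose]
    have a4 : (Zm *ᵥ e2) ⬝ᵥ d1 = e2 ⬝ᵥ (Zmᵀ *ᵥ d1) := dp_swap _ _ _
    have a5 : f2 ⬝ᵥ d2 = d2 ⬝ᵥ f2 := dotProduct_comm _ _
    have a6 : (Bmᵀ *ᵥ e2) ⬝ᵥ d4 = e2 ⬝ᵥ (Bm *ᵥ d4) := by
      rw [dp_swap, transpose_transpose]
    have a7 : d2 ⬝ᵥ (Amᵀ *ᵥ μ) = 0 := by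
      rw [← dp_swap, k3, zero_dotProduct]
    have a8 : e2 ⬝ᵥ (Amᵀ *ᵥ ν) = 0 := by
      rw [← dp_swap, h3, zero_dotProduct]
    have t1 : (Gm *ᵥ d2) ⬝ᵥ e2 = d2 ⬝ᵥ (Gmᵀ *ᵥ e2) := dp_swap _ _ _
    have t4 : d2 ⬝ᵥ (Gmᵀ *ᵥ e2) = -(d2 ⬝ᵥ (Gm *ᵥ e2)) := by
      rw [hskew, neg_mulVec, dotProduct_neg]
    have t3 : e2 ⬝ᵥ (Gm *ᵥ d2) = (Gm *ᵥ d2) ⬝ᵥ e2 := dotProduct_comm _ _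
    linarith
  · intro H
    have h1 : f1 = Zm *ᵥ e2 := by
      have := H _ (mem_test Zm Am Bm Gm (f1 - Zm *ᵥ e2) 0 0 0 0 (by simp))
      simp only [pairVpqm, mulVec_zero, dotProduct_zero, zero_dotProduct, add_zero, zero_add,
        neg_zero, neg_dotProduct, dotProduct_neg] at this
      have s1 : (Zmᵀ *ᵥ (f1 - Zm *ᵥ e2)) ⬝ᵥ e2 = (f1 - Zm *ᵥ e2) ⬝ᵥ (Zm *ᵥ e2) := by
        rw [dp_swap, transpose_transpose]
      have s2 : f1 ⬝ᵥ (f1 - Zm *ᵥ e2) = (f1 - Zm *ᵥ e2) ⬝ᵥ f1 := dotProduct_comm _ _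
      have s3 : (f1 - Zm *ᵥ e2) ⬝ᵥ (f1 - Zm *ᵥ e2)
          = (f1 - Zm *ᵥ e2) ⬝ᵥ f1 - (f1 - Zm *ᵥ e2) ⬝ᵥ (Zm *ᵥ e2) := dotProduct_sub _ _ _
      have hself : (f1 - Zm *ᵥ e2) ⬝ᵥ (f1 - Zm *ᵥ e2) = 0 := by linarith
      rw [dotProduct_self_eq_zero, sub_eq_zero] at hself
      exact hself
    have h2 : f3 = e2 := by
      have := H _ (mem_test Zm Am Bm Gm 0 0 (f3 - e2) 0 0 (by simp))
      simp only [pairVpqm, mulVec_zero, dotProduct_zero, zero_dotProduct, add_zero, zero_add,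
        neg_zero, neg_dotProduct, dotProduct_neg] at this
      have s1 : (f3 - e2) ⬝ᵥ e2 = e2 ⬝ᵥ (f3 - e2) := dotProduct_comm _ _
      have s2 : f3 ⬝ᵥ (f3 - e2) = (f3 - e2) ⬝ᵥ f3 := dotProduct_comm _ _
      have s3 : (f3 - e2) ⬝ᵥ (f3 - e2) = (f3 - e2) ⬝ᵥ f3 - (f3 - e2) ⬝ᵥ e2 :=
        dotProduct_sub _ _ _
      have s4 : e2 ⬝ᵥ (f3 - e2) = (f3 - e2) ⬝ᵥ e2 := dotProduct_comm _ _
      have hself : (f3 - e2) ⬝ᵥ (f3 - e2) = 0 := by linarith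
      rw [dotProduct_self_eq_zero, sub_eq_zero] at hself
      exact hself
    have h3 : Am *ᵥ e2 = 0 := by
      have := H _ (mem_test Zm Am Bm Gm 0 0 0 0 (Am *ᵥ e2) (by simp))
      simp only [pairVpqm, mulVec_zero, dotProduct_zero, zero_dotProduct, add_zero, zero_add,
        neg_zero, neg_dotProduct, dotProduct_neg] at this
      have s1 : (Amᵀ *ᵥ (Am *ᵥ e2)) ⬝ᵥ e2 = (Am *ᵥ e2) ⬝ᵥ (Am *ᵥ e2) := by
        rw [dp_swap, transpose_transpose]
      have hself : (Am *ᵥ e2) ⬝ᵥ (Am *ᵥ e2) = 0 := by linarith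
      rwa [dotProduct_self_eq_zero] at hself
    have h4 : f4 = Bmᵀ *ᵥ e2 := by
      have := H _ (mem_test Zm Am Bm Gm 0 0 0 (f4 - Bmᵀ *ᵥ e2) 0 (by simp))
      simp only [pairVpqm, mulVec_zero, dotProduct_zero, zero_dotProduct, add_zero, zero_add,
        neg_zero, neg_dotProduct, dotProduct_neg] at this
      have s1 : (Bm *ᵥ (f4 - Bmᵀ *ᵥ e2)) ⬝ᵥ e2 = (f4 - Bmᵀ *ᵥ e2) ⬝ᵥ (Bmᵀ *ᵥ e2) :=
        dp_swap _ _ _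
      have s2 : f4 ⬝ᵥ (f4 - Bmᵀ *ᵥ e2) = (f4 - Bmᵀ *ᵥ e2) ⬝ᵥ f4 := dotProduct_comm _ _
      have s3 : (f4 - Bmᵀ *ᵥ e2) ⬝ᵥ (f4 - Bmᵀ *ᵥ e2)
          = (f4 - Bmᵀ *ᵥ e2) ⬝ᵥ f4 - (f4 - Bmᵀ *ᵥ e2) ⬝ᵥ (Bmᵀ *ᵥ e2) := dotProduct_sub _ _ _
      have hself : (f4 - Bmᵀ *ᵥ e2) ⬝ᵥ (f4 - Bmᵀ *ᵥ e2) = 0 := by linarith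
      rw [dotProduct_self_eq_zero, sub_eq_zero] at hself
      exact hself
    refine ⟨h1, h2, h3, h4, ?_⟩
    set w := f2 + Zmᵀ *ᵥ e1 + Gm *ᵥ e2 + e3 + Bm *ᵥ e4 with hwdef
    have hperp : ∀ v, Am *ᵥ v = 0 → w ⬝ᵥ v = 0 := by
      intro d2 hd2
      have := H _ (mem_test Zm Am Bm Gm 0 d2 0 0 0 hd2)
      simp only [pairVpqm, mulVec_zero, dotProduct_zero, zero_dotProduct, add_zero, zero_add,
        neg_zero, neg_dotProduct, dotProduct_neg] at this
      have b1 : (Zmᵀ *ᵥ e1) ⬝ᵥ d2 = (Zm *ᵥ d2) ⬝ᵥ e1 := by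
        rw [dp_swap, transpose_transpose, dotProduct_comm]
      have b2 : (Gm *ᵥ e2) ⬝ᵥ d2 = -((Gm *ᵥ d2) ⬝ᵥ e2) := by
        rw [dp_swap, hskew, neg_mulVec, dotProduct_neg, dotProduct_comm]
      have b3 : (Bm *ᵥ e4) ⬝ᵥ d2 = (Bmᵀ *ᵥ d2) ⬝ᵥ e4 := by
        rw [dp_swap, dotProduct_comm]
      have b4 : e3 ⬝ᵥ d2 = d2 ⬝ᵥ e3 := dotProduct_comm _ _
      have b5 : f2 ⬝ᵥ d2 = d2 ⬝ᵥ f2 := dotProduct_comm _ _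
      simp only [hwdef, add_dotProduct]
      linarith
    obtain ⟨μ', hμ'⟩ := mem_range_transpose Am w hperp
    refine ⟨-μ', ?_⟩
    have hz : w + Amᵀ *ᵥ (-μ') = 0 := by
      rw [Matrix.mulVec_neg, ← hμ', add_neg_cancel]
    simpa [hwdef] using hz

def Dmod : Submodule ℝ (Vpqm p q mm × Vpqm p q mm) where
  carrier := Dset Zm Am Bm Gm
  add_mem' := by
    rintro ⟨⟨f1, f2, f3, f4⟩, e1, e2, e3, e4⟩ ⟨⟨g1, g2, g3, g4⟩, d1, d2, d3, d4⟩
      ⟨h1, h2, h3, h4, μ, h5⟩ ⟨k1, k2, k3, k4, ν, k5⟩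
    dsimp only [Dset, Set.mem_setOf_eq, Prod.fst_add, Prod.snd_add, Prod.mk_add_mk] at *
    refine ⟨by rw [h1, k1, Matrix.mulVec_add], by rw [h2, k2],
      by rw [Matrix.mulVec_add, h3, k3, add_zero], by rw [h4, k4, Matrix.mulVec_add],
      ⟨μ + ν, ?_⟩⟩
    have : (f2 + Zmᵀ *ᵥ e1 + Gm *ᵥ e2 + e3 + Bm *ᵥ e4 + Amᵀ *ᵥ μ)
        + (g2 + Zmᵀ *ᵥ d1 + Gm *ᵥ d2 + d3 + Bm *ᵥ d4 + Amᵀ *ᵥ ν) = 0 := by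
      rw [h5, k5, add_zero]
    calc f2 + g2 + Zmᵀ *ᵥ (e1 + d1) + Gm *ᵥ (e2 + d2) + (e3 + d3) + Bm *ᵥ (e4 + d4)
          + Amᵀ *ᵥ (μ + ν)
        = (f2 + Zmᵀ *ᵥ e1 + Gm *ᵥ e2 + e3 + Bm *ᵥ e4 + Amᵀ *ᵥ μ)
          + (g2 + Zmᵀ *ᵥ d1 + Gm *ᵥ d2 + d3 + Bm *ᵥ d4 + Amᵀ *ᵥ ν) := by
          rw [Matrix.mulVec_add, Matrix.mulVec_add, Matrix.mulVec_add, Matrix.mulVec_add]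
          abel
      _ = 0 := this
  zero_mem' := by
    refine ⟨by simp, by simp, by simp, by simp, ⟨0, by simp⟩⟩
  smul_mem' := by
    rintro c ⟨⟨f1, f2, f3, f4⟩, e1, e2, e3, e4⟩ ⟨h1, h2, h3, h4, μ, h5⟩
    dsimp only [Dset, Set.mem_setOf_eq, Prod.smul_fst, Prod.smul_snd, Prod.smul_mk] at *
    refine ⟨by rw [h1, Matrix.mulVec_smul], by rw [h2],
      by rw [Matrix.mulVec_smul, h3, smul_zero], by rw [h4, Matrix.mulVec_smul],
      ⟨c • μ, ?_⟩⟩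
    calc c • f2 + Zmᵀ *ᵥ (c • e1) + Gm *ᵥ (c • e2) + c • e3 + Bm *ᵥ (c • e4) + Amᵀ *ᵥ (c • μ)
        = c • (f2 + Zmᵀ *ᵥ e1 + Gm *ᵥ e2 + e3 + Bm *ᵥ e4 + Amᵀ *ᵥ μ) := by
          rw [Matrix.mulVec_smul, Matrix.mulVec_smul, Matrix.mulVec_smul, Matrix.mulVec_smul]
          module
      _ = 0 := by rw [h5, smul_zero]


end Dirac

section Omega

variable {p q mm : ℕ}

lemma pair_add_left (x y e : Vpqm p q mm) :
    pairVpqm (x + y) e = pairVpqm x e + pairVpqm y e := by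
  obtain ⟨x1, x2, x3, x4⟩ := x; obtain ⟨y1, y2, y3, y4⟩ := y; obtain ⟨e1, e2, e3, e4⟩ := e
  simp [pairVpqm, add_dotProduct]; ring

lemma pair_smul_left (c : ℝ) (x e : Vpqm p q mm) :
    pairVpqm (c • x) e = c * pairVpqm x e := by
  obtain ⟨x1, x2, x3, x4⟩ := x; obtain ⟨e1, e2, e3, e4⟩ := e
  simp [pairVpqm, smul_dotProduct, smul_eq_mul]; ring

lemma pair_add_right (x e d : Vpqm p q mm) :
    pairVpqm x (e + d) = pairVpqm x e + pairVpqm x d := by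
  obtain ⟨x1, x2, x3, x4⟩ := x; obtain ⟨e1, e2, e3, e4⟩ := e; obtain ⟨d1, d2, d3, d4⟩ := d
  simp [pairVpqm, dotProduct_add]; ring

lemma pair_smul_right (c : ℝ) (x e : Vpqm p q mm) :
    pairVpqm x (c • e) = c * pairVpqm x e := by
  obtain ⟨x1, x2, x3, x4⟩ := x; obtain ⟨e1, e2, e3, e4⟩ := e
  simp [pairVpqm, dotProduct_smul, smul_eq_mul]; ring

noncomputable def omegaForm : LinearMap.BilinForm ℝ (Vpqm p q mm × Vpqm p q mm) :=
  LinearMap.mk₂ ℝ (fun x y => pairVpqm x.1 y.2 + pairVpqm y.1 x.2)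
    (by intro x y z
        simp only [Prod.fst_add, Prod.snd_add, pair_add_left, pair_add_right]; ring)
    (by intro c x y
        simp only [Prod.smul_fst, Prod.smul_snd, pair_smul_left, pair_smul_right,
          smul_eq_mul]; ring)
    (by intro x y z
        simp only [Prod.fst_add, Prod.snd_add, pair_add_left, pair_add_right]; ring)
    (by intro c x y
        simp only [Prod.smul_fst, Prod.smul_snd, pair_smul_left, pair_smul_right,
          smul_eq_mul]; ring)

lemma omegaForm_apply (x y : Vpqm p q mm × Vpqm p q mm) :
    omegaForm x y = pairVpqm x.1 y.2 + pairVpqm y.1 x.2 := rfl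

lemma omegaForm_refl : (omegaForm (p := p) (q := q) (mm := mm)).IsRefl := by
  intro x y h
  rw [omegaForm_apply] at *
  linarith

lemma omegaForm_nondeg : (omegaForm (p := p) (q := q) (mm := mm)).Nondegenerate := by
  refine (LinearMap.IsRefl.nondegenerate_iff_separatingLeft omegaForm_refl).2 ?_
  intro x hx
  have := hx (x.2, x.1)
  rw [omegaForm_apply] at this
  obtain ⟨⟨f1, f2, f3, f4⟩, e1, e2, e3, e4⟩ := x
  simp only [pairVpqm] at this
  have n1 := dp_self_nonneg f1; have n2 := dp_self_nonneg f2
  have n3 := dp_self_nonneg f3; have n4 := dp_self_nonneg f4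
  have n5 := dp_self_nonneg e1; have n6 := dp_self_nonneg e2
  have n7 := dp_self_nonneg e3; have n8 := dp_self_nonneg e4
  have z1 : f1 ⬝ᵥ f1 = 0 := by linarith
  have z2 : f2 ⬝ᵥ f2 = 0 := by linarith
  have z3 : f3 ⬝ᵥ f3 = 0 := by linarith
  have z4 : f4 ⬝ᵥ f4 = 0 := by linarith
  have z5 : e1 ⬝ᵥ e1 = 0 := by linarith
  have z6 : e2 ⬝ᵥ e2 = 0 := by linarith
  have z7 : e3 ⬝ᵥ e3 = 0 := by linarith
  have z8 : e4 ⬝ᵥ e4 = 0 := by linarith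
  rw [dotProduct_self_eq_zero] at z1 z2 z3 z4 z5 z6 z7 z8
  simp [Prod.ext_iff, z1, z2, z3, z4, z5, z6, z7, z8]

lemma finrank_Vpqm2 : finrank ℝ (Vpqm p q mm × Vpqm p q mm) = 2 * (p + q + q + mm) := by
  simp [Module.finrank_prod, Module.finrank_fin_fun]
  ring

lemma finrank_Dmod {l : ℕ} (Zm : Matrix (Fin p) (Fin q) ℝ) (Am : Matrix (Fin l) (Fin q) ℝ)
    (Bm : Matrix (Fin q) (Fin mm) ℝ) (Gm : Matrix (Fin q) (Fin q) ℝ)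
    (hdirac : IsDiracPair pairVpqm (Dset Zm Am Bm Gm)) :
    finrank ℝ (Dmod Zm Am Bm Gm) = p + q + q + mm := by
  have horth : omegaForm.orthogonal (Dmod Zm Am Bm Gm) = Dmod Zm Am Bm Gm := by
    ext x
    rw [LinearMap.BilinForm.mem_orthogonal_iff]
    have := (hdirac x).symm
    constructor
    · intro hx
      exact this.mp (fun qq hq => hx qq hq)
    · intro hx qq hq
      exact this.mpr hx qq hq
  have hfr := LinearMap.BilinForm.finrank_orthogonal (B := omegaForm)
    omegaForm_nondeg (Dmod Zm Am Bm Gm)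
  rw [horth, finrank_Vpqm2] at hfr
  have hle : finrank ℝ (Dmod Zm Am Bm Gm) ≤ 2 * (p + q + q + mm) := by
    have := Submodule.finrank_le (Dmod Zm Am Bm Gm)
    rwa [finrank_Vpqm2] at this
  omega

end Omega

section Cont

lemma contOn_matmul {X : Type*} [TopologicalSpace X] {s : Set X} {a b c : ℕ}
    {F : X → Matrix (Fin a) (Fin b) ℝ} {H : X → Matrix (Fin b) (Fin c) ℝ}
    (hF : ContinuousOn F s) (hH : ContinuousOn H s) : ContinuousOn (fun x => F x * H x) s :=
  (continuous_fst.matrix_mul continuous_snd).comp_continuousOn (hF.prodMk hH)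

lemma contOn_mulVec {X : Type*} [TopologicalSpace X] {s : Set X} {a b : ℕ}
    {F : X → Matrix (Fin a) (Fin b) ℝ} (hF : ContinuousOn F s) (c : Fin b → ℝ) :
    ContinuousOn (fun x => F x *ᵥ c) s :=
  (continuous_id.matrix_mulVec continuous_const).comp_continuousOn hF

lemma rank_def' {a b : ℕ} (M : Matrix (Fin a) (Fin b) ℝ) :
    M.rank = finrank ℝ (LinearMap.range M.mulVecLin) := rfl

end Cont

end MultibodyDirac

/-- For continuous `A : U_pos → ℝ^{ℓ×n_kin}` of constant rank, continuous
`B : U_pos → ℝ^{n_kin×m}`, `Z : U_pos → ℝ^{n_pot×n_kin}` and continuous pointwise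
skew-symmetric `G : ℝ^{n_kin} → ℝ^{n_kin×n_kin}`, the family of sets of pairs of flows
`(ϖ_Lf, τ_Lf, ϖ_R, ϖ_ext)` and efforts `(τ_Le, ϖ_Le, τ_R, τ_ext)` with
`ϖ_Lf = Z(ζ) ϖ_Le`, `ϖ_R = ϖ_Le`, `A(ζ) ϖ_Le = 0`, `ϖ_ext = B(ζ)ᵀ ϖ_Le` and
`τ_Lf + Z(ζ)ᵀ τ_Le + G(Γ) ϖ_Le + τ_R + B(ζ) τ_ext + A(ζ)ᵀ μ = 0` for some `μ`,
indexed by `(ζ,Γ) ∈ U_pos × ℝ^{n_kin}`, is a modulated Dirac structure. -/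
theorem multibody_isModulatedDirac {npot nkin m ℓ : ℕ}
    (Upos : Set (Fin npot → ℝ)) (hUpos : IsOpen Upos)
    (A : (Fin npot → ℝ) → Matrix (Fin ℓ) (Fin nkin) ℝ)
    (B : (Fin npot → ℝ) → Matrix (Fin nkin) (Fin m) ℝ)
    (G : (Fin nkin → ℝ) → Matrix (Fin nkin) (Fin nkin) ℝ)
    (Z : (Fin npot → ℝ) → Matrix (Fin npot) (Fin nkin) ℝ)
    (hA : ContinuousOn A Upos) (hB : ContinuousOn B Upos)
    (hG : Continuous G) (hZ : ContinuousOn Z Upos)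
    (hrank : ∃ ρ : ℕ, ∀ ζ ∈ Upos, (A ζ).rank = ρ)
    (hskew : ∀ Γ : Fin nkin → ℝ, (G Γ)ᵀ = -(G Γ)) :
    IsModulatedDirac (Fin (npot + 2 * nkin + m) → ℝ) pairVpqm
      (Upos ×ˢ (Set.univ : Set (Fin nkin → ℝ)))
      (fun ζΓ => {x : Vpqm npot nkin m × Vpqm npot nkin m |
        x.1.1 = Z ζΓ.1 *ᵥ x.2.2.1 ∧ x.1.2.2.1 = x.2.2.1 ∧
        A ζΓ.1 *ᵥ x.2.2.1 = 0 ∧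
        x.1.2.2.2 = (B ζΓ.1)ᵀ *ᵥ x.2.2.1 ∧
        ∃ μ : Fin ℓ → ℝ,
          x.1.2.1 + (Z ζΓ.1)ᵀ *ᵥ x.2.1 + G ζΓ.2 *ᵥ x.2.2.1 + x.2.2.2.1
            + B ζΓ.1 *ᵥ x.2.2.2.2 + (A ζΓ.1)ᵀ *ᵥ μ = 0}) := by
  constructor
  · rintro ⟨ζ, Γ⟩ hx
    exact MultibodyDirac.isDirac (Z ζ) (A ζ) (B ζ) (G Γ) (hskew Γ)
  · rintro ⟨ζ₀, Γ₀⟩ hx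
    have hζ₀ : ζ₀ ∈ Upos := hx.1
    obtain ⟨ρ, hρ⟩ := hrank
    obtain ⟨P₀, hPt, hPi, hPmem, hPfix⟩ :=
      MultibodyDirac.exists_proj (LinearMap.ker (A ζ₀).mulVecLin)
    obtain ⟨Q₀, hQt, hQi, hQmem, hQfix⟩ :=
      MultibodyDirac.exists_proj (LinearMap.range (A ζ₀).mulVecLin)
    have hAP : A ζ₀ * P₀ = 0 := by
      apply MultibodyDirac.mat_eq_of_mulVec
      intro v
      rw [← Matrix.mulVec_mulVec, Matrix.zero_mulVec]
      have := hPmem v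
      rwa [LinearMap.mem_ker, Matrix.mulVecLin_apply] at this
    have hPA : P₀ * (A ζ₀)ᵀ = 0 := by
      have h := congrArg Matrix.transpose hAP
      rwa [Matrix.transpose_mul, hPt, Matrix.transpose_zero] at h
    have hQA : Q₀ * A ζ₀ = A ζ₀ := by
      apply MultibodyDirac.mat_eq_of_mulVec
      intro v
      rw [← Matrix.mulVec_mulVec]
      exact hQfix _ ⟨v, rfl⟩
    have hQrank : Q₀.rank = ρ := by
      have hrange : LinearMap.range Q₀.mulVecLin = LinearMap.range (A ζ₀).mulVecLin := by
        apply le_antisymm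
        · rintro x ⟨v, rfl⟩
          simpa [Matrix.mulVecLin_apply] using hQmem v
        · rintro x ⟨v, rfl⟩
          refine ⟨(A ζ₀).mulVecLin v, ?_⟩
          simp only [Matrix.mulVecLin_apply]
          exact hQfix _ ⟨v, rfl⟩
      rw [MultibodyDirac.rank_def', hrange, ← MultibodyDirac.rank_def']
      exact hρ ζ₀ hζ₀
    set Mm : (Fin npot → ℝ) → Matrix (Fin ℓ) (Fin ℓ) ℝ :=
      fun ζ => Q₀ * A ζ * (A ζ₀)ᵀ + (1 - Q₀) with hMm
    have hMinj : ∀ μ, Mm ζ₀ *ᵥ μ = 0 → μ = 0 := by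
      intro μ hμ
      have hμ' : (A ζ₀ * (A ζ₀)ᵀ) *ᵥ μ + (μ - Q₀ *ᵥ μ) = 0 := by
        have hMeq : Mm ζ₀ = A ζ₀ * (A ζ₀)ᵀ + (1 - Q₀) := by
          show Q₀ * A ζ₀ * (A ζ₀)ᵀ + (1 - Q₀) = _
          rw [hQA]
        rw [hMeq] at hμ
        rwa [Matrix.add_mulVec, Matrix.sub_mulVec, Matrix.one_mulVec] at hμ
      have hdot := congrArg (fun v => v ⬝ᵥ μ) hμ'
      simp only [add_dotProduct, zero_dotProduct] at hdot
      have t1 : ((A ζ₀ * (A ζ₀)ᵀ) *ᵥ μ) ⬝ᵥ μ = ((A ζ₀)ᵀ *ᵥ μ) ⬝ᵥ ((A ζ₀)ᵀ *ᵥ μ) := by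
        rw [← Matrix.mulVec_mulVec, MultibodyDirac.dp_swap]
      have t2 : (μ - Q₀ *ᵥ μ) ⬝ᵥ (Q₀ *ᵥ μ) = 0 := by
        have hsw := MultibodyDirac.dp_swap Q₀ᵀ (μ - Q₀ *ᵥ μ) μ
        rw [transpose_transpose, hQt] at hsw
        rw [← hsw, Matrix.mulVec_sub, Matrix.mulVec_mulVec, hQi, sub_self, zero_dotProduct]
      have t3 : (μ - Q₀ *ᵥ μ) ⬝ᵥ μ = (μ - Q₀ *ᵥ μ) ⬝ᵥ (μ - Q₀ *ᵥ μ) := by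
        rw [dotProduct_sub, t2, sub_zero]
      have n1 := MultibodyDirac.dp_self_nonneg ((A ζ₀)ᵀ *ᵥ μ)
      have n2 := MultibodyDirac.dp_self_nonneg (μ - Q₀ *ᵥ μ)
      have z1 : ((A ζ₀)ᵀ *ᵥ μ) ⬝ᵥ ((A ζ₀)ᵀ *ᵥ μ) = 0 := by
        rw [t1, t3] at hdot; linarith
      have z2 : (μ - Q₀ *ᵥ μ) ⬝ᵥ (μ - Q₀ *ᵥ μ) = 0 := by
        rw [t1, t3] at hdot; linarith
      rw [dotProduct_self_eq_zero] at z1 z2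
      have hQμ : μ = Q₀ *ᵥ μ := by
        have := sub_eq_zero.mp z2; exact this
      obtain ⟨x, hxv⟩ := hQmem μ
      rw [Matrix.mulVecLin_apply] at hxv
      have hμA : μ = A ζ₀ *ᵥ x := by rw [hQμ, ← hxv]
      have hz : (A ζ₀)ᵀ *ᵥ (A ζ₀ *ᵥ x) = 0 := by rw [← hμA]; exact z1
      have hdx := congrArg (fun v => v ⬝ᵥ x) hz
      simp only [zero_dotProduct] at hdx
      have tt : ((A ζ₀)ᵀ *ᵥ (A ζ₀ *ᵥ x)) ⬝ᵥ x = (A ζ₀ *ᵥ x) ⬝ᵥ (A ζ₀ *ᵥ x) := by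
        rw [MultibodyDirac.dp_swap, transpose_transpose]
      rw [tt] at hdx
      rw [dotProduct_self_eq_zero] at hdx
      rw [hμA, hdx]
    have hdet₀ : (Mm ζ₀).det ≠ 0 := by
      intro h
      obtain ⟨v, hv0, hv⟩ := Matrix.exists_mulVec_eq_zero_iff.mpr h
      exact hv0 (hMinj v hv)
    set U₁ : Set (Fin npot → ℝ) := Upos ∩ (fun ζ => (Mm ζ).det) ⁻¹' {(0:ℝ)}ᶜ with hU₁def
    have hMcont : ContinuousOn Mm Upos := by
      have hc : Continuous fun N : Matrix (Fin ℓ) (Fin nkin) ℝ =>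
          Q₀ * N * (A ζ₀)ᵀ + (1 - Q₀) :=
        ((continuous_const.matrix_mul continuous_id).matrix_mul continuous_const).add
          continuous_const
      exact hc.comp_continuousOn hA
    have hdetcont : ContinuousOn (fun ζ => (Mm ζ).det) Upos :=
      (continuous_id.matrix_det).comp_continuousOn hMcont
    have hU₁open : IsOpen U₁ := hdetcont.isOpen_inter_preimage hUpos isOpen_compl_singleton
    have hζ₀U₁ : ζ₀ ∈ U₁ := ⟨hζ₀, hdet₀⟩
    have hU₁sub : U₁ ⊆ Upos := Set.inter_subset_left
    have hdetU₁ : ∀ ζ ∈ U₁, IsUnit (Mm ζ).det := fun ζ hζ => isUnit_iff_ne_zero.mpr hζ.2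
    have e1q : (1 - Q₀) * Q₀ = 0 := by
      rw [Matrix.sub_mul, Matrix.one_mul, hQi, sub_self]
    have e2q : (1 - Q₀) * (1 - Q₀) = 1 - Q₀ := by
      rw [Matrix.mul_sub, Matrix.mul_one, e1q, sub_zero]
    have h1q : ∀ ζ, (1 - Q₀) * Mm ζ = 1 - Q₀ := by
      intro ζ
      show (1 - Q₀) * (Q₀ * A ζ * (A ζ₀)ᵀ + (1 - Q₀)) = 1 - Q₀
      rw [Matrix.mul_add, e2q, ← Matrix.mul_assoc, ← Matrix.mul_assoc, e1q,
        Matrix.zero_mul, Matrix.zero_mul, zero_add]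
    have hID0 : ∀ ζ ∈ U₁, (1 - Q₀) * (Mm ζ)⁻¹ = 1 - Q₀ := by
      intro ζ hζ
      conv_lhs => rw [← h1q ζ]
      rw [Matrix.mul_assoc, Matrix.mul_nonsing_inv _ (hdetU₁ ζ hζ), Matrix.mul_one]
    have hID0' : ∀ ζ ∈ U₁, (1 - Q₀) * ((Mm ζ)⁻¹ * Q₀) = 0 := by
      intro ζ hζ
      rw [← Matrix.mul_assoc, hID0 ζ hζ, e1q]
    have hsubM : ∀ ζ, Q₀ * A ζ * (A ζ₀)ᵀ = Mm ζ - (1 - Q₀) := by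
      intro ζ
      show _ = Q₀ * A ζ * (A ζ₀)ᵀ + (1 - Q₀) - (1 - Q₀)
      rw [add_sub_cancel_right]
    have hID1 : ∀ ζ ∈ U₁, Q₀ * A ζ * (A ζ₀)ᵀ * ((Mm ζ)⁻¹ * Q₀) = Q₀ := by
      intro ζ hζ
      rw [hsubM ζ, Matrix.sub_mul, ← Matrix.mul_assoc (Mm ζ),
        Matrix.mul_nonsing_inv _ (hdetU₁ ζ hζ), Matrix.one_mul, hID0' ζ hζ, sub_zero]
    have hfact : ∀ ζ ∈ U₁, (Q₀ * A ζ) * ((A ζ₀)ᵀ * ((Mm ζ)⁻¹ * Q₀)) = Q₀ := by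
      intro ζ hζ
      rw [← Matrix.mul_assoc]
      exact hID1 ζ hζ
    set Rm : (Fin npot → ℝ) → Matrix (Fin nkin) (Fin nkin) ℝ :=
      fun ζ => (A ζ₀)ᵀ * ((Mm ζ)⁻¹ * (Q₀ * A ζ)) with hRm
    set Kmat : (Fin npot → ℝ) → Matrix (Fin nkin) (Fin nkin) ℝ :=
      fun ζ => (1 - Rm ζ) * P₀ with hKmat
    set Φm : (Fin npot → ℝ) → Matrix (Fin nkin) (Fin nkin) ℝ :=
      fun ζ => (A ζ)ᵀ * (Q₀ * (A ζ₀ * (1 - P₀))) with hΦm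
    have hQAK : ∀ ζ ∈ U₁, Q₀ * (A ζ * Kmat ζ) = 0 := by
      intro ζ hζ
      have h := congrArg (fun Y => Y * (A ζ)) (hID1 ζ hζ)
      simp only [Matrix.mul_assoc] at h
      show Q₀ * (A ζ * ((1 - Rm ζ) * P₀)) = 0
      rw [← Matrix.mul_assoc (A ζ), Matrix.mul_sub (A ζ), Matrix.mul_one,
        ← Matrix.mul_assoc Q₀, Matrix.mul_sub Q₀, hRm]
      simp only
      rw [show Q₀ * (A ζ * ((A ζ₀)ᵀ * ((Mm ζ)⁻¹ * (Q₀ * A ζ)))) = Q₀ * A ζ from h,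
        sub_self, Matrix.zero_mul]
    have hrkQA : ∀ ζ ∈ U₁, (Q₀ * A ζ).rank = ρ := by
      intro ζ hζ
      refine le_antisymm ?_ ?_
      · have := Matrix.rank_mul_le_right Q₀ (A ζ)
        rwa [hρ ζ (hU₁sub hζ)] at this
      · have := Matrix.rank_mul_le_left (Q₀ * A ζ) ((A ζ₀)ᵀ * ((Mm ζ)⁻¹ * Q₀))
        rw [hfact ζ hζ, hQrank] at this
        exact this
    have hkerQA : ∀ ζ ∈ U₁,
        LinearMap.ker (Q₀ * A ζ).mulVecLin = LinearMap.ker (A ζ).mulVecLin := by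
      intro ζ hζ
      have hle : LinearMap.ker (A ζ).mulVecLin ≤ LinearMap.ker (Q₀ * A ζ).mulVecLin := by
        intro v hv
        rw [LinearMap.mem_ker, Matrix.mulVecLin_apply] at hv ⊢
        rw [← Matrix.mulVec_mulVec, hv, Matrix.mulVec_zero]
      have d1 := LinearMap.finrank_range_add_finrank_ker (A ζ).mulVecLin
      have d2 := LinearMap.finrank_range_add_finrank_ker (Q₀ * A ζ).mulVecLin
      rw [← MultibodyDirac.rank_def', hρ ζ (hU₁sub hζ)] at d1
      rw [← MultibodyDirac.rank_def', hrkQA ζ hζ] at d2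
      exact (Submodule.eq_of_le_of_finrank_le hle (by omega)).symm
    have hAK : ∀ ζ ∈ U₁, A ζ * Kmat ζ = 0 := by
      intro ζ hζ
      apply MultibodyDirac.mat_eq_of_mulVec
      intro v
      have h0 : (Q₀ * A ζ) *ᵥ (Kmat ζ *ᵥ v) = 0 := by
        rw [Matrix.mulVec_mulVec, Matrix.mul_assoc, hQAK ζ hζ, Matrix.zero_mulVec]
      have hmem : Kmat ζ *ᵥ v ∈ LinearMap.ker (Q₀ * A ζ).mulVecLin := by
        rwa [LinearMap.mem_ker, Matrix.mulVecLin_apply]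
      rw [hkerQA ζ hζ, LinearMap.mem_ker, Matrix.mulVecLin_apply] at hmem
      rw [Matrix.zero_mulVec, ← Matrix.mulVec_mulVec]
      exact hmem
    have hPK : ∀ ζ ∈ U₁, P₀ * Kmat ζ = P₀ := by
      intro ζ hζ
      show P₀ * ((1 - Rm ζ) * P₀) = P₀
      have hPR : P₀ * Rm ζ = 0 := by
        show P₀ * ((A ζ₀)ᵀ * ((Mm ζ)⁻¹ * (Q₀ * A ζ))) = 0
        rw [← Matrix.mul_assoc, hPA, Matrix.zero_mul]
      rw [← Matrix.mul_assoc, Matrix.mul_sub, Matrix.mul_one, hPR, sub_zero, hPi]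
    have hID1T : ∀ ζ ∈ U₁,
        Q₀ * (((Mm ζ)⁻¹)ᵀ * (A ζ₀ * ((A ζ)ᵀ * Q₀))) = Q₀ := by
      intro ζ hζ
      have h := congrArg Matrix.transpose (hID1 ζ hζ)
      simpa [Matrix.transpose_mul, hQt, Matrix.transpose_transpose, Matrix.mul_assoc] using h
    have hrec : ∀ ζ ∈ U₁, ∀ w, Φm ζ *ᵥ w = 0 → P₀ *ᵥ w = 0 → w = 0 := by
      intro ζ hζ w hΦ hP
      have hLeft : (Q₀ * (((Mm ζ)⁻¹)ᵀ * A ζ₀)) * Φm ζ = A ζ₀ * (1 - P₀) := by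
        have h := congrArg (fun Y => Y * (A ζ₀ * (1 - P₀))) (hID1T ζ hζ)
        simp only [Matrix.mul_assoc] at h ⊢
        rw [hΦm]
        simp only [Matrix.mul_assoc]
        rw [h]
        have h2 := congrArg (fun Y => Y * (1 - P₀)) hQA
        simp only [Matrix.mul_assoc] at h2
        exact h2
      have hA0 : (A ζ₀ * (1 - P₀)) *ᵥ w = 0 := by
        rw [← hLeft, ← Matrix.mulVec_mulVec, hΦ, Matrix.mulVec_zero]
      have hmem : (1 - P₀) *ᵥ w ∈ LinearMap.ker (A ζ₀).mulVecLin := by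
        rw [LinearMap.mem_ker, Matrix.mulVecLin_apply, Matrix.mulVec_mulVec]
        exact hA0
      have hfix := hPfix _ hmem
      rw [Matrix.mulVec_mulVec, Matrix.mul_sub, Matrix.mul_one, hPi, sub_self,
        Matrix.zero_mulVec] at hfix
      have hw0 : (1 - P₀) *ᵥ w = 0 := hfix.symm
      rw [Matrix.sub_mulVec, Matrix.one_mulVec, hP, sub_zero] at hw0
      exact hw0
    -- the linear trivialization
    set pr1 : Vpqm npot nkin m →ₗ[ℝ] (Fin npot → ℝ) :=
      LinearMap.fst ℝ (Fin npot → ℝ) ((Fin nkin → ℝ) × (Fin nkin → ℝ) × (Fin m → ℝ)) with hpr1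
    set prr : Vpqm npot nkin m →ₗ[ℝ] ((Fin nkin → ℝ) × (Fin nkin → ℝ) × (Fin m → ℝ)) :=
      LinearMap.snd ℝ (Fin npot → ℝ) ((Fin nkin → ℝ) × (Fin nkin → ℝ) × (Fin m → ℝ)) with hprr
    set pr2 : Vpqm npot nkin m →ₗ[ℝ] (Fin nkin → ℝ) :=
      (LinearMap.fst ℝ (Fin nkin → ℝ) ((Fin nkin → ℝ) × (Fin m → ℝ))).comp prr with hpr2
    set pr34 : Vpqm npot nkin m →ₗ[ℝ] ((Fin nkin → ℝ) × (Fin m → ℝ)) :=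
      (LinearMap.snd ℝ (Fin nkin → ℝ) ((Fin nkin → ℝ) × (Fin m → ℝ))).comp prr with hpr34
    set pr3 : Vpqm npot nkin m →ₗ[ℝ] (Fin nkin → ℝ) :=
      (LinearMap.fst ℝ (Fin nkin → ℝ) (Fin m → ℝ)).comp pr34 with hpr3
    set pr4 : Vpqm npot nkin m →ₗ[ℝ] (Fin m → ℝ) :=
      (LinearMap.snd ℝ (Fin nkin → ℝ) (Fin m → ℝ)).comp pr34 with hpr4
    set Tfun : ((Fin npot → ℝ) × (Fin nkin → ℝ)) →
        (Vpqm npot nkin m →ₗ[ℝ] Vpqm npot nkin m × Vpqm npot nkin m) := fun y =>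
      LinearMap.prod
        (LinearMap.prod (((Z y.1 * Kmat y.1).mulVecLin).comp pr2)
          (LinearMap.prod
            ((((Φm y.1).mulVecLin).comp pr2) -
              (((((Z y.1)ᵀ).mulVecLin).comp pr1) + (((G y.2 * Kmat y.1).mulVecLin).comp pr2)
                + pr3 + (((B y.1).mulVecLin).comp pr4)))
            (LinearMap.prod (((Kmat y.1).mulVecLin).comp pr2)
              ((((B y.1)ᵀ * Kmat y.1).mulVecLin).comp pr2))))
        (LinearMap.prod pr1 (LinearMap.prod (((Kmat y.1).mulVecLin).comp pr2)
          (LinearMap.prod pr3 pr4))) with hTfun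
    have hfrVpqm : Module.finrank ℝ (Vpqm npot nkin m) = npot + (nkin + (nkin + m)) := by
      simp [Module.finrank_prod]
    set esplit : (Fin (npot + 2 * nkin + m) → ℝ) ≃ₗ[ℝ] Vpqm npot nkin m :=
      LinearEquiv.ofFinrankEq _ _ (by
        rw [hfrVpqm, Module.finrank_fin_fun]
        omega) with hesplit
    refine ⟨U₁ ×ˢ Set.univ, hU₁open.prod isOpen_univ, ⟨hζ₀U₁, trivial⟩,
      (fun y hy => ⟨hU₁sub hy.1, trivial⟩), ?_⟩
    refine ⟨fun y => (Tfun y).comp esplit.toLinearMap, ?_, ?_⟩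
    · rintro ⟨ζ, Γ⟩ hy
      have hζ : ζ ∈ U₁ := hy.1
      have hinjT : Function.Injective (Tfun (ζ, Γ)) := by
        rw [injective_iff_map_eq_zero]
        rintro ⟨u1, u2, u3, u4⟩ h
        have h1 : u1 = 0 := congrArg (fun w : Vpqm npot nkin m × Vpqm npot nkin m => w.2.1) h
        have h3 : u3 = 0 := congrArg (fun w : Vpqm npot nkin m × Vpqm npot nkin m => w.2.2.2.1) h
        have h4 : u4 = 0 := congrArg (fun w : Vpqm npot nkin m × Vpqm npot nkin m => w.2.2.2.2) h
        have hK : Kmat ζ *ᵥ u2 = 0 :=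
          congrArg (fun w : Vpqm npot nkin m × Vpqm npot nkin m => w.2.2.1) h
        have hf2 : Φm ζ *ᵥ u2 - ((Z ζ)ᵀ *ᵥ u1 + (G Γ * Kmat ζ) *ᵥ u2 + u3 + B ζ *ᵥ u4) = 0 :=
          congrArg (fun w : Vpqm npot nkin m × Vpqm npot nkin m => w.1.2.1) h
        have hGK : (G Γ * Kmat ζ) *ᵥ u2 = 0 := by
          rw [← Matrix.mulVec_mulVec, hK, Matrix.mulVec_zero]
        rw [h1, h3, h4, hGK, Matrix.mulVec_zero, Matrix.mulVec_zero] at hf2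
        simp only [add_zero, zero_add, sub_zero] at hf2
        have hPu : P₀ *ᵥ u2 = 0 := by
          have := congrArg (fun v => P₀ *ᵥ v) hK
          simpa [Matrix.mulVec_mulVec, hPK ζ hζ, Matrix.mulVec_zero] using this
        have hu2 : u2 = 0 := hrec ζ hζ u2 hf2 hPu
        rw [h1, h3, h4, hu2]
        rfl
      constructor
      · exact hinjT.comp esplit.injective
      · have hsubD : LinearMap.range (Tfun (ζ, Γ)) ≤
            MultibodyDirac.Dmod (Z ζ) (A ζ) (B ζ) (G Γ) := by
          rintro x ⟨u, rfl⟩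
          obtain ⟨u1, u2, u3, u4⟩ := u
          refine ⟨?_, rfl, ?_, ?_, ⟨-((Q₀ * (A ζ₀ * (1 - P₀))) *ᵥ u2), ?_⟩⟩
          · show (Z ζ * Kmat ζ) *ᵥ u2 = Z ζ *ᵥ (Kmat ζ *ᵥ u2)
            exact (Matrix.mulVec_mulVec _ _ _).symm
          · show A ζ *ᵥ (Kmat ζ *ᵥ u2) = 0
            rw [Matrix.mulVec_mulVec, hAK ζ hζ, Matrix.zero_mulVec]
          · show ((B ζ)ᵀ * Kmat ζ) *ᵥ u2 = (B ζ)ᵀ *ᵥ (Kmat ζ *ᵥ u2)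
            exact (Matrix.mulVec_mulVec _ _ _).symm
          · show (Φm ζ *ᵥ u2 - ((Z ζ)ᵀ *ᵥ u1 + (G Γ * Kmat ζ) *ᵥ u2 + u3 + B ζ *ᵥ u4))
              + (Z ζ)ᵀ *ᵥ u1 + G Γ *ᵥ (Kmat ζ *ᵥ u2) + u3 + B ζ *ᵥ u4
              + (A ζ)ᵀ *ᵥ (-((Q₀ * (A ζ₀ * (1 - P₀))) *ᵥ u2)) = 0
            have hGK : G Γ *ᵥ (Kmat ζ *ᵥ u2) = (G Γ * Kmat ζ) *ᵥ u2 :=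
              Matrix.mulVec_mulVec _ _ _
            have hμe : (A ζ)ᵀ *ᵥ (-((Q₀ * (A ζ₀ * (1 - P₀))) *ᵥ u2)) = -(Φm ζ *ᵥ u2) := by
              rw [Matrix.mulVec_neg, Matrix.mulVec_mulVec, hΦm]
            rw [hGK, hμe]
            abel
        have hrankT : LinearMap.range (Tfun (ζ, Γ)) =
            MultibodyDirac.Dmod (Z ζ) (A ζ) (B ζ) (G Γ) := by
          apply Submodule.eq_of_le_of_finrank_le hsubD
          rw [MultibodyDirac.finrank_Dmod _ _ _ _
            (MultibodyDirac.isDirac (Z ζ) (A ζ) (B ζ) (G Γ) (hskew Γ)),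
            LinearMap.finrank_range_of_inj hinjT, hfrVpqm]
          omega
        show Set.range (⇑(Tfun (ζ, Γ)) ∘ ⇑esplit) = _
        rw [Set.range_comp, esplit.surjective.range_eq, Set.image_univ,
          ← LinearMap.coe_range, hrankT]
        rfl
    · intro z
      set u : Vpqm npot nkin m := esplit z with hu
      have hTz : (fun y : (Fin npot → ℝ) × (Fin nkin → ℝ) =>
            ((Tfun y).comp esplit.toLinearMap) z) = fun y =>
          (((Z y.1 * Kmat y.1) *ᵥ u.2.1,
            Φm y.1 *ᵥ u.2.1 - ((Z y.1)ᵀ *ᵥ u.1 + (G y.2 * Kmat y.1) *ᵥ u.2.1 + u.2.2.1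
              + B y.1 *ᵥ u.2.2.2),
            Kmat y.1 *ᵥ u.2.1, ((B y.1)ᵀ * Kmat y.1) *ᵥ u.2.1),
          (u.1, Kmat y.1 *ᵥ u.2.1, u.2.2.1, u.2.2.2)) := rfl
      rw [hTz]
      set Ux := U₁ ×ˢ (Set.univ : Set (Fin nkin → ℝ)) with hUx
      have hA1 : ContinuousOn (fun y : (Fin npot → ℝ) × (Fin nkin → ℝ) => A y.1) Ux :=
        (hA.mono hU₁sub).comp continuousOn_fst (fun y hy => hy.1)
      have hB1 : ContinuousOn (fun y : (Fin npot → ℝ) × (Fin nkin → ℝ) => B y.1) Ux :=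
        (hB.mono hU₁sub).comp continuousOn_fst (fun y hy => hy.1)
      have hZ1 : ContinuousOn (fun y : (Fin npot → ℝ) × (Fin nkin → ℝ) => Z y.1) Ux :=
        (hZ.mono hU₁sub).comp continuousOn_fst (fun y hy => hy.1)
      have hG1 : ContinuousOn (fun y : (Fin npot → ℝ) × (Fin nkin → ℝ) => G y.2) Ux :=
        (hG.comp continuous_snd).continuousOn
      have hMinv1 : ContinuousOn
          (fun y : (Fin npot → ℝ) × (Fin nkin → ℝ) => (Mm y.1)⁻¹) Ux := by
        have hd : ContinuousOn (fun y : (Fin npot → ℝ) × (Fin nkin → ℝ) =>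
            ((Mm y.1).det)⁻¹) Ux := by
          refine ContinuousOn.inv₀ ?_ (fun y hy => hy.1.2)
          exact (hdetcont.mono hU₁sub).comp continuousOn_fst (fun y hy => hy.1)
        have hadj : ContinuousOn (fun y : (Fin npot → ℝ) × (Fin nkin → ℝ) =>
            (Mm y.1).adjugate) Ux :=
          (continuous_id.matrix_adjugate).comp_continuousOn
            ((hMcont.mono hU₁sub).comp continuousOn_fst (fun y hy => hy.1))
        refine (hd.smul hadj).congr (fun y _ => ?_)
        rw [Matrix.inv_def, Ring.inverse_eq_inv']; rfl
      have hK1 : ContinuousOn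
          (fun y : (Fin npot → ℝ) × (Fin nkin → ℝ) => Kmat y.1) Ux := by
        have hR : ContinuousOn (fun y : (Fin npot → ℝ) × (Fin nkin → ℝ) => Rm y.1) Ux :=
          MultibodyDirac.contOn_matmul continuousOn_const
            (MultibodyDirac.contOn_matmul hMinv1
              (MultibodyDirac.contOn_matmul continuousOn_const hA1))
        exact MultibodyDirac.contOn_matmul (continuousOn_const.sub hR) continuousOn_const
      have hΦ1 : ContinuousOn
          (fun y : (Fin npot → ℝ) × (Fin nkin → ℝ) => Φm y.1) Ux :=
        MultibodyDirac.contOn_matmul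
          ((continuous_id.matrix_transpose).comp_continuousOn hA1) continuousOn_const
      refine ContinuousOn.prodMk (ContinuousOn.prodMk ?_ (ContinuousOn.prodMk ?_
        (ContinuousOn.prodMk ?_ ?_))) (ContinuousOn.prodMk continuousOn_const
        (ContinuousOn.prodMk ?_ (ContinuousOn.prodMk continuousOn_const continuousOn_const)))
      · exact MultibodyDirac.contOn_mulVec (MultibodyDirac.contOn_matmul hZ1 hK1) _
      · refine ContinuousOn.sub (MultibodyDirac.contOn_mulVec hΦ1 _) ?_
        refine (((MultibodyDirac.contOn_mulVec
            ((continuous_id.matrix_transpose).comp_continuousOn hZ1) _).add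
          (MultibodyDirac.contOn_mulVec (MultibodyDirac.contOn_matmul hG1 hK1) _)).add
          continuousOn_const).add (MultibodyDirac.contOn_mulVec hB1 _)
      · exact MultibodyDirac.contOn_mulVec hK1 _
      · exact MultibodyDirac.contOn_mulVec (MultibodyDirac.contOn_matmul
          ((continuous_id.matrix_transpose).comp_continuousOn hB1) hK1) _
      · exact MultibodyDirac.contOn_mulVec hK1 _
end

section
/- Let U ⊆ ℝ^k be open and let E : U → ℝ^{ℓ×n} be a continuous matrix-valued function of constant rank r, i.e. rank E(x) = r for all x ∈ U. Then for every x ∈ U there exist a neighborhood U_x ⊆ U of x and a continuous function J : U_x → ℝ^{n×(n−r)} such that for all y ∈ U_x the column space of J(y) equals the kernel of E(y), i.e. im J(y) = ker E(y). -/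
open Matrix

section Aux

open Module

lemma aux_finrank_ker {ℓ n : ℕ} (A : Matrix (Fin ℓ) (Fin n) ℝ) :
    Module.finrank ℝ (LinearMap.ker A.mulVecLin) = n - A.rank := by
  have h := LinearMap.finrank_range_add_finrank_ker A.mulVecLin
  rw [Module.finrank_fin_fun] at h
  have hr : A.rank = Module.finrank ℝ (LinearMap.range A.mulVecLin) := rfl
  omega

/-- dot product with a transposed-matrix action -/
lemma aux_dot (m n : ℕ) (A : Matrix (Fin m) (Fin n) ℝ) (v : Fin n → ℝ) (w : Fin m → ℝ) :
    v ⬝ᵥ (Aᵀ *ᵥ w) = (A *ᵥ v) ⬝ᵥ w := by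
  rw [dotProduct_mulVec, vecMul_transpose]

/-- Key pointwise lemma: if `S = EᵀE + J₀J₀ᵀ` is invertible and `J₀` has full column
space of dimension `n - r`, then `S⁻¹ J₀` has column space equal to `ker E`. -/
lemma aux_key {ℓ n r : ℕ} (E' : Matrix (Fin ℓ) (Fin n) ℝ)
    (J0 : Matrix (Fin n) (Fin (n - r)) ℝ)
    (hr : E'.rank = r)
    (hJ0rank : Module.finrank ℝ (LinearMap.range J0.mulVecLin) = n - r)
    (hdet : IsUnit (E'ᵀ * E' + J0 * J0ᵀ).det) :
    LinearMap.range ((E'ᵀ * E' + J0 * J0ᵀ)⁻¹ * J0).mulVecLin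
      = LinearMap.ker E'.mulVecLin := by
  set S : Matrix (Fin n) (Fin n) ℝ := E'ᵀ * E' + J0 * J0ᵀ with hS
  set K : Submodule ℝ (Fin n → ℝ) := LinearMap.ker E'.mulVecLin with hK
  have hKdim : Module.finrank ℝ K = n - r := by rw [hK, aux_finrank_ker, hr]
  -- S maps K into the range of J0
  have hsub : Submodule.map S.mulVecLin K ≤ LinearMap.range J0.mulVecLin := by
    rintro _ ⟨v, hv, rfl⟩
    have hv' : E' *ᵥ v = 0 := hv
    refine ⟨J0ᵀ *ᵥ v, ?_⟩
    simp only [mulVecLin_apply, hS, add_mulVec, ← mulVec_mulVec, hv', mulVec_zero, zero_add]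
  -- S is injective
  have hSinj : Function.Injective S.mulVecLin := by
    intro a b hab
    have h2 := congrArg (fun w => S⁻¹ *ᵥ w) hab
    simpa [mulVecLin_apply, mulVec_mulVec, Matrix.nonsing_inv_mul S hdet] using h2
  -- hence the image of K under S has the same finrank as range J0
  have hmapdim : Module.finrank ℝ (Submodule.map S.mulVecLin K) = n - r := by
    rw [← (Submodule.equivMapOfInjective S.mulVecLin hSinj K).finrank_eq]
    exact hKdim
  have hmap : Submodule.map S.mulVecLin K = LinearMap.range J0.mulVecLin :=
    Submodule.eq_of_le_of_finrank_le hsub (by rw [hmapdim, hJ0rank])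
  -- conclude
  calc LinearMap.range (S⁻¹ * J0).mulVecLin
      = Submodule.map S⁻¹.mulVecLin (LinearMap.range J0.mulVecLin) := by
        rw [mulVecLin_mul, LinearMap.range_comp]
    _ = Submodule.map S⁻¹.mulVecLin (Submodule.map S.mulVecLin K) := by rw [hmap]
    _ = Submodule.map (S⁻¹.mulVecLin ∘ₗ S.mulVecLin) K := (Submodule.map_comp _ _ _).symm
    _ = K := by
        rw [← mulVecLin_mul, Matrix.nonsing_inv_mul S hdet, mulVecLin_one, Submodule.map_id]

end Aux

/-- If `E : U → ℝ^{ℓ×n}` is continuous on the open set `U ⊆ ℝ^k` and has constant rank `r`,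
then around every point of `U` there is a neighborhood on which a continuous
`J : ℝ^k → ℝ^{n×(n−r)}` exists whose column space equals `ker E(y)` pointwise. -/
theorem continuous_kernel_basis {k ℓ n r : ℕ}
    (U : Set (Fin k → ℝ)) (hU : IsOpen U)
    (E : (Fin k → ℝ) → Matrix (Fin ℓ) (Fin n) ℝ)
    (hE : ContinuousOn E U)
    (hrank : ∀ x ∈ U, (E x).rank = r) :
    ∀ x ∈ U, ∃ Ux : Set (Fin k → ℝ), IsOpen Ux ∧ x ∈ Ux ∧ Ux ⊆ U ∧
      ∃ J : (Fin k → ℝ) → Matrix (Fin n) (Fin (n - r)) ℝ,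
        ContinuousOn J Ux ∧
        ∀ y ∈ Ux, LinearMap.range (J y).mulVecLin = LinearMap.ker (E y).mulVecLin := by
  intro x hx
  -- the kernel at x and a basis of it
  set K0 : Submodule ℝ (Fin n → ℝ) := LinearMap.ker (E x).mulVecLin with hK0
  have hK0dim : Module.finrank ℝ K0 = n - r := by rw [hK0, aux_finrank_ker, hrank x hx]
  let b : Module.Basis (Fin (n - r)) ℝ K0 := Module.finBasisOfFinrankEq ℝ K0 hK0dim
  set J0 : Matrix (Fin n) (Fin (n - r)) ℝ := Matrix.of (fun i j => (b j : Fin n → ℝ) i) with hJ0def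
  have hJ0T : J0ᵀ = fun j => (b j : Fin n → ℝ) := by ext j i; rfl
  have hJ0 : LinearMap.range J0.mulVecLin = K0 := by
    rw [Matrix.range_mulVecLin, show J0.col = J0ᵀ from rfl, hJ0T]
    have : Set.range (fun j => (b j : Fin n → ℝ)) = K0.subtype '' Set.range b :=
      (Set.range_comp _ _).symm ▸ rfl
    rw [this, Submodule.span_image, b.span_eq, Submodule.map_top, Submodule.range_subtype]
  have hJ0rank : Module.finrank ℝ (LinearMap.range J0.mulVecLin) = n - r := by
    rw [hJ0]; exact hK0dim
  -- the matrix S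
  set S : (Fin k → ℝ) → Matrix (Fin n) (Fin n) ℝ :=
    fun y => (E y)ᵀ * (E y) + J0 * J0ᵀ with hSdef
  -- S x is invertible
  have hSx : (S x).det ≠ 0 := by
    intro h0
    obtain ⟨v, hv0, hv⟩ := (Matrix.exists_mulVec_eq_zero_iff).mpr h0
    -- compute v ⬝ᵥ (S x *ᵥ v) = |E x v|² + |J0ᵀ v|²
    have hdot : (0:ℝ) = (E x *ᵥ v) ⬝ᵥ (E x *ᵥ v) + (J0ᵀ *ᵥ v) ⬝ᵥ (J0ᵀ *ᵥ v) := by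
      have h1 : v ⬝ᵥ (S x *ᵥ v) = 0 := by rw [hv, dotProduct_zero]
      rw [← h1, hSdef]
      simp only [add_mulVec, dotProduct_add, ← mulVec_mulVec]
      congr 1
      · exact aux_dot ℓ n (E x) v (E x *ᵥ v)
      · have h3 := aux_dot (n - r) n J0ᵀ v (J0ᵀ *ᵥ v)
        rw [transpose_transpose] at h3
        exact h3
    have hEv : E x *ᵥ v = 0 := by
      have hnn1 : (0:ℝ) ≤ (E x *ᵥ v) ⬝ᵥ (E x *ᵥ v) :=
        Finset.sum_nonneg fun i _ => mul_self_nonneg _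
      have hnn2 : (0:ℝ) ≤ (J0ᵀ *ᵥ v) ⬝ᵥ (J0ᵀ *ᵥ v) :=
        Finset.sum_nonneg fun i _ => mul_self_nonneg _
      have : (E x *ᵥ v) ⬝ᵥ (E x *ᵥ v) = 0 := by linarith
      exact dotProduct_self_eq_zero.mp this
    have hJv : J0ᵀ *ᵥ v = 0 := by
      have hnn1 : (0:ℝ) ≤ (E x *ᵥ v) ⬝ᵥ (E x *ᵥ v) :=
        Finset.sum_nonneg fun i _ => mul_self_nonneg _
      have hnn2 : (0:ℝ) ≤ (J0ᵀ *ᵥ v) ⬝ᵥ (J0ᵀ *ᵥ v) :=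
        Finset.sum_nonneg fun i _ => mul_self_nonneg _
      have : (J0ᵀ *ᵥ v) ⬝ᵥ (J0ᵀ *ᵥ v) = 0 := by linarith
      exact dotProduct_self_eq_zero.mp this
    -- v is in the kernel of E x, hence in the range of J0
    have hvK : v ∈ K0 := hEv
    rw [← hJ0] at hvK
    obtain ⟨h, hh⟩ := hvK
    have hh' : J0 *ᵥ h = v := hh
    have : (J0 *ᵥ h) ⬝ᵥ (J0 *ᵥ h) = 0 := by
      rw [← aux_dot n (n - r) J0 h (J0 *ᵥ h), hh', hJv, dotProduct_zero]
    have : J0 *ᵥ h = 0 := dotProduct_self_eq_zero.mp this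
    exact hv0 (by rw [← hh', this])
  -- continuity of S on U
  have hErest : Continuous (fun y : U => E y) := continuousOn_iff_continuous_restrict.mp hE
  have hSrest : Continuous (fun y : U => S y) :=
    (hErest.matrix_transpose.matrix_mul hErest).add continuous_const
  have hdetcont : ContinuousOn (fun y => (S y).det) U :=
    continuousOn_iff_continuous_restrict.mpr hSrest.matrix_det
  -- the neighborhood
  set Ux : Set (Fin k → ℝ) := U ∩ (fun y => (S y).det) ⁻¹' {(0:ℝ)}ᶜ with hUxdef
  have hUxopen : IsOpen Ux := hdetcont.isOpen_inter_preimage hU (isOpen_compl_singleton)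
  have hxUx : x ∈ Ux := ⟨hx, by simpa using hSx⟩
  have hUxU : Ux ⊆ U := Set.inter_subset_left
  refine ⟨Ux, hUxopen, hxUx, hUxU, ?_⟩
  -- the continuous kernel basis
  refine ⟨fun y => ((S y).det)⁻¹ • (S y).adjugate * J0, ?_, ?_⟩
  · -- continuity
    rw [continuousOn_iff_continuous_restrict]
    have hScontOn : ContinuousOn S U := by
      rw [continuousOn_iff_continuous_restrict]; exact hSrest
    have hSrest' : Continuous (fun y : Ux => S y) :=
      continuousOn_iff_continuous_restrict.mp (hScontOn.mono hUxU)
    have hdetne : ∀ y : Ux, (S (y : Fin k → ℝ)).det ≠ 0 := fun y => by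
      have := y.2.2; simpa using this
    exact ((hSrest'.matrix_det.inv₀ hdetne).smul hSrest'.matrix_adjugate).matrix_mul
      continuous_const
  · intro y hy
    have hyU : y ∈ U := hUxU hy
    have hdetne : (S y).det ≠ 0 := by have := hy.2; simpa using this
    have hinv : (S y)⁻¹ = ((S y).det)⁻¹ • (S y).adjugate := by
      rw [Matrix.inv_def, Ring.inverse_eq_inv]
    have := aux_key (E y) J0 (hrank y hyU) hJ0rank (isUnit_iff_ne_zero.mpr hdetne)
    rw [hinv] at this
    exact this
end

section
/- Let D ⊆ ℝ^n × ℝ^n be a Dirac structure and let E ∈ ℝ^{ℓ×n}. Then D̃ := {(f,e) ∈ ℝ^n × ℝ^n : E e = 0 and there exists μ ∈ ℝ^ℓ with (f + Eᵀμ, e) ∈ D} is again a Dirac structure. -/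
open Matrix

/-- A subset `D ⊆ ℝ^N × ℝ^N` is a Dirac structure if membership in `D` is equivalent to
being "orthogonal" to all of `D` with respect to the pairing `(f,e),(f̂,ê) ↦ f̂ᵀe + fᵀê`. -/
def IsDirac {N : ℕ} (D : Set ((Fin N → ℝ) × (Fin N → ℝ))) : Prop :=
  ∀ p : (Fin N → ℝ) × (Fin N → ℝ),
    p ∈ D ↔ ∀ q ∈ D, q.1 ⬝ᵥ p.2 + p.1 ⬝ᵥ q.2 = 0

/-- If `D ⊆ ℝ^n × ℝ^n` is a Dirac structure and `E ∈ ℝ^{ℓ×n}`, then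
`D̃ = {(f,e) : E e = 0 and (f + Eᵀμ, e) ∈ D for some μ}` is again a Dirac structure. -/
theorem constrained_isDirac {n ℓ : ℕ}
    (D : Set ((Fin n → ℝ) × (Fin n → ℝ))) (hD : IsDirac D)
    (E : Matrix (Fin ℓ) (Fin n) ℝ) :
    IsDirac {p : (Fin n → ℝ) × (Fin n → ℝ) |
      E *ᵥ p.2 = 0 ∧ ∃ μ : Fin ℓ → ℝ, (p.1 + Eᵀ *ᵥ μ, p.2) ∈ D} := by
  have key : ∀ (μ : Fin ℓ → ℝ) (x : Fin n → ℝ), (Eᵀ *ᵥ μ) ⬝ᵥ x = μ ⬝ᵥ (E *ᵥ x) := by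
    intro μ x
    rw [Matrix.mulVec_transpose, ← Matrix.dotProduct_mulVec]
  have hzero : ((0, 0) : (Fin n → ℝ) × (Fin n → ℝ)) ∈ D := by
    rw [hD]
    intro q _; simp
  -- D as a submodule
  let D' : Submodule ℝ ((Fin n → ℝ) × (Fin n → ℝ)) :=
    { carrier := D
      add_mem' := by
        intro a b ha hb
        rw [hD]
        intro q hq
        have h1 := (hD a).mp ha q hq
        have h2 := (hD b).mp hb q hq
        simp only [Prod.fst_add, Prod.snd_add, dotProduct_add, add_dotProduct]
        linarith
      zero_mem' := hzero
      smul_mem' := by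
        intro c a ha
        rw [hD]
        intro q hq
        have h1 := (hD a).mp ha q hq
        simp only [Prod.smul_fst, Prod.smul_snd, dotProduct_smul, smul_dotProduct,
          smul_eq_mul]
        linear_combination c * h1 }
  intro p
  constructor
  · rintro ⟨hpe, μ, hpD⟩ q ⟨hqe, ν, hqD⟩
    have h := (hD _).mp hpD _ hqD
    simp only [add_dotProduct, dotProduct_add, key, hpe, hqe, dotProduct_zero] at h ⊢
    linarith
  · intro hp
    obtain ⟨f, e⟩ := p
    -- first: E e = 0
    have hEe : E *ᵥ e = 0 := by
      funext i
      have hmem : ((Eᵀ *ᵥ Pi.single i 1, 0) : (Fin n → ℝ) × (Fin n → ℝ)) ∈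
          {p : (Fin n → ℝ) × (Fin n → ℝ) |
            E *ᵥ p.2 = 0 ∧ ∃ μ : Fin ℓ → ℝ, (p.1 + Eᵀ *ᵥ μ, p.2) ∈ D} := by
        refine ⟨by simp, -(Pi.single i 1), ?_⟩
        have h0 : (Eᵀ *ᵥ Pi.single i 1) + Eᵀ *ᵥ (-Pi.single i 1) = 0 := by
          rw [← Matrix.mulVec_add]; simp
        show ((Eᵀ *ᵥ Pi.single i 1) + Eᵀ *ᵥ (-Pi.single i 1), (0 : Fin n → ℝ)) ∈ D
        rw [h0]; exact hzero
      have := hp _ hmem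
      simp only [key, dotProduct_zero, add_zero] at this
      simpa using this
    -- functionals on D'
    let φ : D' →ₗ[ℝ] ℝ :=
      { toFun := fun q => q.1.1 ⬝ᵥ e + f ⬝ᵥ q.1.2
        map_add' := by
          intro a b
          simp [dotProduct_add, add_dotProduct]
          ring
        map_smul' := by
          intro c a
          simp [dotProduct_smul, smul_dotProduct, smul_eq_mul]
          ring }
    let L : Fin ℓ → (D' →ₗ[ℝ] ℝ) := fun i =>
      { toFun := fun q => (E *ᵥ q.1.2) i
        map_add' := by intro a b; simp [Matrix.mulVec_add]
        map_smul' := by intro c a; simp [Matrix.mulVec_smul] }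
    have hker : ⨅ i, LinearMap.ker (L i) ≤ LinearMap.ker φ := by
      intro q hq
      simp only [Submodule.mem_iInf, LinearMap.mem_ker] at hq
      have hq2 : E *ᵥ (q : (Fin n → ℝ) × (Fin n → ℝ)).2 = 0 := funext fun i => hq i
      have hmem : (q : (Fin n → ℝ) × (Fin n → ℝ)) ∈
          {p : (Fin n → ℝ) × (Fin n → ℝ) |
            E *ᵥ p.2 = 0 ∧ ∃ μ : Fin ℓ → ℝ, (p.1 + Eᵀ *ᵥ μ, p.2) ∈ D} := by
        refine ⟨hq2, 0, ?_⟩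
        simp only [Matrix.mulVec_zero, add_zero]; exact q.2
      have := hp _ hmem
      simp only [φ, LinearMap.coe_mk, AddHom.coe_mk] at this ⊢
      exact this
    have hspan := mem_span_of_iInf_ker_le_ker hker
    obtain ⟨c, hc⟩ := (Submodule.mem_span_range_iff_exists_fun ℝ).1 hspan
    refine ⟨hEe, -c, ?_⟩
    rw [hD]
    intro q hq
    have hφ : φ ⟨q, hq⟩ = ∑ i, c i * (E *ᵥ q.2) i := by
      rw [← hc]
      simp [L]
    have hφ' : q.1 ⬝ᵥ e + f ⬝ᵥ q.2 = c ⬝ᵥ (E *ᵥ q.2) := hφ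
    simp only [add_dotProduct, key, neg_dotProduct]
    linarith
end

section
/- Let U ⊆ ℝ^k be open, let (D_x)_{x∈U} be a modulated Dirac structure with D_x ⊆ ℝ^n × ℝ^n for all x ∈ U, and let E : U → ℝ^{ℓ×n} be continuous. Assume that the dimension of the subspace D_x ∩ (ℝ^n × ker E(x)) is independent of x ∈ U. For x ∈ U define D̃_x := {(f,e) ∈ ℝ^n × ℝ^n : E(x) e = 0 and there exists μ ∈ ℝ^ℓ with (f + E(x)ᵀμ, e) ∈ D_x}. Then the family (D̃_x)_{x∈U} is a modulated Dirac structure. -/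
open Matrix

noncomputable section
namespace CDirac
open Module
variable {n ℓ : ℕ}

abbrev V (n : ℕ) := (Fin n → ℝ) × (Fin n → ℝ)

/-- inner product on V -/
def ip (n : ℕ) : LinearMap.BilinForm ℝ (V n) :=
  LinearMap.mk₂ ℝ (fun p q => p.1 ⬝ᵥ q.1 + p.2 ⬝ᵥ q.2)
    (fun p p' q => by simp [add_dotProduct]; ring)
    (fun c p q => by simp [smul_dotProduct]; ring)
    (fun p q q' => by simp [dotProduct_add]; ring)
    (fun c p q => by simp [dotProduct_smul]; ring)

/-- the Dirac pairing form on V -/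
def Phi (n : ℕ) : LinearMap.BilinForm ℝ (V n) :=
  LinearMap.mk₂ ℝ (fun p q => p.1 ⬝ᵥ q.2 + q.1 ⬝ᵥ p.2)
    (fun p p' q => by simp [add_dotProduct, dotProduct_add]; ring)
    (fun c p q => by simp [smul_dotProduct, dotProduct_smul]; ring)
    (fun p q q' => by simp [add_dotProduct, dotProduct_add]; ring)
    (fun c p q => by simp [smul_dotProduct, dotProduct_smul]; ring)

lemma ip_self_eq_zero {p : V n} (h : ip n p p = 0) : p = 0 := by
  have h1 : p.1 ⬝ᵥ p.1 = 0 ∧ p.2 ⬝ᵥ p.2 = 0 := by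
    constructor <;>
    · have h1 : (0:ℝ) ≤ p.1 ⬝ᵥ p.1 := Finset.sum_nonneg fun i _ => mul_self_nonneg _
      have h2 : (0:ℝ) ≤ p.2 ⬝ᵥ p.2 := Finset.sum_nonneg fun i _ => mul_self_nonneg _
      simp only [ip, LinearMap.mk₂_apply] at h
      linarith
  have e1 := (dotProduct_self_eq_zero (v := p.1)).mp h1.1
  have e2 := (dotProduct_self_eq_zero (v := p.2)).mp h1.2
  exact Prod.ext e1 e2

lemma Phi_isSymm : ∀ p q : V n, Phi n p q = Phi n q p := by
  intro p q; simp [Phi]; ring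

lemma Phi_refl : (Phi n).IsRefl := fun p q h => by rw [Phi_isSymm]; exact h

lemma Phi_nondeg : (Phi n).Nondegenerate := by
  suffices hL : LinearMap.SeparatingLeft (Phi n) from
    ⟨hL, fun p hp => hL p fun q => by rw [Phi_isSymm]; exact hp q⟩
  intro p hp
  have := hp (p.2, p.1)
  simp only [Phi, LinearMap.mk₂_apply] at this
  apply ip_self_eq_zero (n := n)
  simp only [ip, LinearMap.mk₂_apply]
  rw [dotProduct_comm] at this
  linarith [this]

lemma finrank_V : finrank ℝ (V n) = 2 * n := by
  simp [V, finrank_prod]; ring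

section PartA
variable (E : Matrix (Fin ℓ) (Fin n) ℝ)

def Ksub (E : Matrix (Fin ℓ) (Fin n) ℝ) : Submodule ℝ (V n) :=
  LinearMap.ker (E.mulVecLin ∘ₗ LinearMap.snd ℝ (Fin n → ℝ) (Fin n → ℝ))

def Fsub (E : Matrix (Fin ℓ) (Fin n) ℝ) : Submodule ℝ (V n) :=
  LinearMap.range ((Eᵀ.mulVecLin).prod (0 : (Fin ℓ → ℝ) →ₗ[ℝ] (Fin n → ℝ)))

lemma mem_Ksub {p : V n} : p ∈ Ksub E ↔ E *ᵥ p.2 = 0 := Iff.rfl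

lemma mem_Fsub {p : V n} : p ∈ Fsub E ↔ ∃ μ, ((Eᵀ *ᵥ μ, 0) : V n) = p := by
  constructor
  · rintro ⟨μ, rfl⟩; exact ⟨μ, rfl⟩
  · rintro ⟨μ, rfl⟩; exact ⟨μ, rfl⟩

lemma Fsub_le_Ksub : Fsub E ≤ Ksub E := by
  rintro p hp
  obtain ⟨μ, rfl⟩ := (mem_Fsub E).mp hp
  simp [mem_Ksub]

lemma orth_sup (B : LinearMap.BilinForm ℝ (V n)) (A C : Submodule ℝ (V n)) :
    B.orthogonal (A ⊔ C) = B.orthogonal A ⊓ B.orthogonal C := by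
  ext p
  constructor
  · intro h
    exact ⟨fun q hq => h q (Submodule.mem_sup_left hq),
           fun q hq => h q (Submodule.mem_sup_right hq)⟩
  · rintro ⟨h1, h2⟩ q hq
    obtain ⟨a, ha, c, hc, rfl⟩ := Submodule.mem_sup.mp hq
    have : B (a + c) p = B a p + B c p := by rw [map_add]; rfl
    rw [this, h1 a ha, h2 c hc, add_zero]

lemma orth_inf (A C : Submodule ℝ (V n)) :
    (Phi n).orthogonal (A ⊓ C) = (Phi n).orthogonal A ⊔ (Phi n).orthogonal C := by
  have h := orth_sup (Phi n) ((Phi n).orthogonal A) ((Phi n).orthogonal C)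
  rw [LinearMap.BilinForm.orthogonal_orthogonal Phi_nondeg Phi_refl,
      LinearMap.BilinForm.orthogonal_orthogonal Phi_nondeg Phi_refl] at h
  rw [← h, LinearMap.BilinForm.orthogonal_orthogonal Phi_nondeg Phi_refl]

lemma orth_Fsub : (Phi n).orthogonal (Fsub E) = Ksub E := by
  ext p
  simp only [LinearMap.BilinForm.mem_orthogonal_iff, mem_Ksub]
  constructor
  · intro h
    have key : ∀ μ : Fin ℓ → ℝ, μ ⬝ᵥ (E *ᵥ p.2) = 0 := by
      intro μ
      have := h (Eᵀ *ᵥ μ, 0) ((mem_Fsub E).mpr ⟨μ, rfl⟩)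
      simp only [LinearMap.BilinForm.IsOrtho, Phi, LinearMap.mk₂_apply] at this
      rw [dotProduct_zero, add_zero, mulVec_transpose, ← dotProduct_mulVec] at this
      exact this
    exact dotProduct_self_eq_zero.mp (key (E *ᵥ p.2))
  · intro h q hq
    obtain ⟨μ, rfl⟩ := (mem_Fsub E).mp hq
    simp only [LinearMap.BilinForm.IsOrtho, Phi, LinearMap.mk₂_apply]
    rw [dotProduct_zero, add_zero, mulVec_transpose, ← dotProduct_mulVec, h, dotProduct_zero]

lemma orth_Ksub : (Phi n).orthogonal (Ksub E) = Fsub E := by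
  rw [← orth_Fsub E, LinearMap.BilinForm.orthogonal_orthogonal Phi_nondeg Phi_refl]

def Dtil (D : Submodule ℝ (V n)) (E : Matrix (Fin ℓ) (Fin n) ℝ) : Submodule ℝ (V n) :=
  (D ⊔ Fsub E) ⊓ Ksub E

lemma Dtil_set_eq (D : Submodule ℝ (V n)) :
    ((Dtil D E : Submodule ℝ (V n)) : Set (V n)) =
      {p : V n | E *ᵥ p.2 = 0 ∧ ∃ μ : Fin ℓ → ℝ, (p.1 + Eᵀ *ᵥ μ, p.2) ∈ D} := by
  ext p
  simp only [SetLike.mem_coe, Dtil, Submodule.mem_inf, mem_Ksub, Set.mem_setOf_eq]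
  rw [and_comm]
  apply and_congr_right
  intro _
  constructor
  · intro h
    obtain ⟨d, hd, q, hq, hdq⟩ := Submodule.mem_sup.mp h
    obtain ⟨μ, rfl⟩ := (mem_Fsub E).mp hq
    refine ⟨-μ, ?_⟩
    have h1 : p.1 = d.1 + Eᵀ *ᵥ μ := by rw [← hdq]; rfl
    have h2 : p.2 = d.2 := by rw [← hdq]; simp [Prod.snd_add]
    have : (p.1 + Eᵀ *ᵥ (-μ), p.2) = d := by
      rw [h1, h2, mulVec_neg]; ext <;> simp
    rwa [this]
  · rintro ⟨μ, hμ⟩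
    apply Submodule.mem_sup.mpr
    refine ⟨(p.1 + Eᵀ *ᵥ μ, p.2), hμ, (Eᵀ *ᵥ (-μ), 0), (mem_Fsub E).mpr ⟨-μ, rfl⟩, ?_⟩
    rw [mulVec_neg]; ext <;> simp

lemma isDiracPair_iff_orth (S : Submodule ℝ (V n)) :
    IsDiracPair (fun f e : Fin n → ℝ => f ⬝ᵥ e) (S : Set (V n)) ↔ (Phi n).orthogonal S = S := by
  have key : ∀ p : V n, (∀ q ∈ S, q.1 ⬝ᵥ p.2 + p.1 ⬝ᵥ q.2 = 0) ↔ p ∈ (Phi n).orthogonal S := by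
    intro p
    simp only [LinearMap.BilinForm.mem_orthogonal_iff, LinearMap.BilinForm.IsOrtho, Phi,
      LinearMap.mk₂_apply]
  constructor
  · intro h
    ext p
    have h2 : p ∈ (S : Set (V n)) ↔ p ∈ (Phi n).orthogonal S := (h p).trans (key p)
    exact h2.symm
  · intro h p
    have h2 : p ∈ (Phi n).orthogonal S ↔ p ∈ S := by rw [h]
    exact (h2.symm.trans (key p).symm :)

lemma dirac_Dtil (D : Submodule ℝ (V n)) (hD : (Phi n).orthogonal D = D) :
    (Phi n).orthogonal (Dtil D E) = Dtil D E := by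
  have hFK : Fsub E ≤ Ksub E := Fsub_le_Ksub E
  have modular : (D ⊔ Fsub E) ⊓ Ksub E = Fsub E ⊔ (D ⊓ Ksub E) := by
    rw [sup_comm D (Fsub E), sup_inf_assoc_of_le _ hFK]
  rw [Dtil, orth_inf, orth_sup, orth_Ksub, orth_Fsub, hD, modular, sup_comm]

lemma finrank_dirac (S : Submodule ℝ (V n)) (hS : (Phi n).orthogonal S = S) :
    finrank ℝ S = n := by
  have h := LinearMap.BilinForm.finrank_add_finrank_orthogonal (B := Phi n) Phi_refl S
  rw [LinearMap.BilinForm.orthogonal_top_eq_bot Phi_nondeg, inf_bot_eq, finrank_bot,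
    add_zero, hS, finrank_V] at h
  omega

end PartA

section Gram
variable {m : ℕ}

def gram (v : Fin m → V n) : Matrix (Fin m) (Fin m) ℝ :=
  Matrix.of fun i j => ip n (v i) (v j)

lemma ip_sum_right (u : V n) (c : Fin m → ℝ) (v : Fin m → V n) :
    ip n u (∑ j, c j • v j) = ∑ j, c j * ip n u (v j) := by
  rw [map_sum]
  congr 1; ext j
  rw [_root_.map_smul]; rfl

lemma ip_sum_left (c : Fin m → ℝ) (v : Fin m → V n) (u : V n) :
    ip n (∑ j, c j • v j) u = ∑ j, c j * ip n (v j) u := by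
  rw [map_sum, LinearMap.sum_apply]
  congr 1; ext j
  rw [_root_.map_smul]; rfl

lemma gram_mulVec (v : Fin m → V n) (c : Fin m → ℝ) :
    gram v *ᵥ c = fun i => ip n (v i) (∑ j, c j • v j) := by
  funext i
  rw [ip_sum_right]
  simp [gram, mulVec, dotProduct, mul_comm]

lemma gram_det_ne_zero_iff (v : Fin m → V n) :
    (gram v).det ≠ 0 ↔ LinearIndependent ℝ v := by
  constructor
  · intro hdet
    rw [Fintype.linearIndependent_iff]
    intro c hc
    by_contra hne
    push_neg at hne
    obtain ⟨i0, hi0⟩ := hne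
    have hc0 : c ≠ 0 := fun h => hi0 (by rw [h]; rfl)
    have : gram v *ᵥ c = 0 := by
      rw [gram_mulVec, hc]
      funext i; simp
    exact hdet (Matrix.exists_mulVec_eq_zero_iff.mp ⟨c, hc0, this⟩)
  · intro hind
    intro hdet
    obtain ⟨c, hc0, hc⟩ := Matrix.exists_mulVec_eq_zero_iff.mpr hdet
    have hw : ip n (∑ j, c j • v j) (∑ j, c j • v j) = 0 := by
      rw [ip_sum_left]
      have : ∀ j, ip n (v j) (∑ i, c i • v i) = 0 := by
        intro j
        have := congrFun hc j
        rwa [gram_mulVec] at this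
      simp [this]
    have hzero : (∑ j, c j • v j) = 0 := ip_self_eq_zero hw
    have := Fintype.linearIndependent_iff.mp hind c hzero
    exact hc0 (funext this)
end Gram

section KernelFrame
variable {l nn m : ℕ}

lemma quad_split (M : Matrix (Fin l) (Fin nn) ℝ) (W : Matrix (Fin nn) (Fin m) ℝ)
    (z : Fin nn → ℝ) (h : (Mᵀ * M + W * Wᵀ) *ᵥ z = 0) :
    M *ᵥ z = 0 ∧ Wᵀ *ᵥ z = 0 := by
  have key : (M *ᵥ z) ⬝ᵥ (M *ᵥ z) + (Wᵀ *ᵥ z) ⬝ᵥ (Wᵀ *ᵥ z) = 0 := by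
    have h0 := congrArg (fun w => z ⬝ᵥ w) h
    simp only [dotProduct_zero] at h0
    rw [add_mulVec, dotProduct_add, ← mulVec_mulVec, ← mulVec_mulVec,
      dotProduct_mulVec z Mᵀ, vecMul_transpose, dotProduct_mulVec z W] at h0
    rw [← h0]
    congr 1
    rw [← vecMul_transpose, Matrix.transpose_transpose]
  have h1 : (0:ℝ) ≤ (M *ᵥ z) ⬝ᵥ (M *ᵥ z) := Finset.sum_nonneg fun i _ => mul_self_nonneg _
  have h2 : (0:ℝ) ≤ (Wᵀ *ᵥ z) ⬝ᵥ (Wᵀ *ᵥ z) := Finset.sum_nonneg fun i _ => mul_self_nonneg _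
  constructor
  · exact dotProduct_self_eq_zero.mp (by linarith)
  · exact dotProduct_self_eq_zero.mp (by linarith)

lemma H_det_ne_zero (M : Matrix (Fin l) (Fin nn) ℝ) (W : Matrix (Fin nn) (Fin m) ℝ)
    (hspan : LinearMap.ker M.mulVecLin ≤ LinearMap.range W.mulVecLin) :
    (Mᵀ * M + W * Wᵀ).det ≠ 0 := by
  intro hdet
  obtain ⟨z, hz0, hz⟩ := Matrix.exists_mulVec_eq_zero_iff.mpr hdet
  obtain ⟨hMz, hWz⟩ := quad_split M W z hz
  obtain ⟨a, ha⟩ := hspan (show z ∈ LinearMap.ker M.mulVecLin from hMz)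
  apply hz0
  have hWa : W *ᵥ a = z := ha
  have hzz : z ⬝ᵥ z = 0 := by
    calc z ⬝ᵥ z = (W *ᵥ a) ⬝ᵥ z := by rw [hWa]
      _ = (a ᵥ* Wᵀ) ⬝ᵥ z := by rw [vecMul_transpose]
      _ = a ⬝ᵥ (Wᵀ *ᵥ z) := (dotProduct_mulVec a Wᵀ z).symm
      _ = 0 := by rw [hWz, dotProduct_zero]
  exact dotProduct_self_eq_zero.mp hzz

lemma kernel_frame (M : Matrix (Fin l) (Fin nn) ℝ) (P : Matrix (Fin nn) (Fin nn) ℝ)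
    {m' : ℕ} (W : Matrix (Fin nn) (Fin m') ℝ) (hP : P = W * Wᵀ)
    (H : Matrix (Fin nn) (Fin nn) ℝ) (hH : H = Mᵀ * M + P)
    (hdet : H.det ≠ 0)
    (hker : finrank ℝ (LinearMap.ker M.mulVecLin) = m') :
    LinearMap.ker M.mulVecLin = LinearMap.range (H⁻¹ * P).mulVecLin := by
  have hunit : IsUnit H.det := isUnit_iff_ne_zero.mpr hdet
  have hle : LinearMap.ker M.mulVecLin ≤ LinearMap.range (H⁻¹ * P).mulVecLin := by
    intro z hz
    have hMz : M *ᵥ z = 0 := hz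
    have hHz : H *ᵥ z = P *ᵥ z := by
      rw [hH, add_mulVec, ← mulVec_mulVec, hMz, mulVec_zero, zero_add]
    refine ⟨z, ?_⟩
    show (H⁻¹ * P) *ᵥ z = z
    rw [← mulVec_mulVec, ← hHz, mulVec_mulVec, Matrix.nonsing_inv_mul H hunit, Matrix.one_mulVec]
  have hrank : finrank ℝ (LinearMap.range (H⁻¹ * P).mulVecLin) ≤
      finrank ℝ (LinearMap.ker M.mulVecLin) := by
    rw [hker]
    have h1 : (H⁻¹ * P).rank ≤ P.rank := Matrix.rank_mul_le_right _ _
    have h2 : P.rank ≤ W.rank := hP ▸ Matrix.rank_mul_le_left W Wᵀ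
    have h3 : W.rank ≤ m' := Matrix.rank_le_width W
    exact le_trans (le_trans h1 h2) h3
  exact Submodule.eq_of_le_of_finrank_le hle hrank

end KernelFrame

lemma Dtil_eq_sup (E : Matrix (Fin ℓ) (Fin n) ℝ) (D : Submodule ℝ (V n)) :
    Dtil D E = (D ⊓ Ksub E) ⊔ Fsub E := by
  rw [Dtil, sup_comm D, sup_inf_assoc_of_le _ (Fsub_le_Ksub E), sup_comm]

lemma T_expand {W : Type*} [AddCommGroup W] [Module ℝ W] (T : (Fin n → ℝ) →ₗ[ℝ] W)
    (z : Fin n → ℝ) : T z = ∑ j, z j • T (Pi.single j 1) := by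
  have hz : z = ∑ j, z j • (Pi.single j 1 : Fin n → ℝ) := by
    have : (fun j => z j • (Pi.single j 1 : Fin n → ℝ)) = fun j => Pi.single j (z j) := by
      funext j
      rw [← Pi.single_smul, smul_eq_mul, mul_one]
    rw [this, Finset.univ_sum_single]
  conv_lhs => rw [hz]
  rw [map_sum]
  congr 1; funext j; rw [_root_.map_smul]

end CDirac
end

open CDirac Module in
/-- Incorporating the additional constraint `E(x) e = 0` (with forces `E(x)ᵀ μ`) into a
modulated Dirac structure `(D x)_{x ∈ U}` yields again a modulated Dirac structure, provided
`E` is continuous and the dimension of `D x ∩ (ℝ^n × ker E(x))` does not depend on `x ∈ U`. -/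
theorem constrained_isModulatedDirac {k n ℓ : ℕ}
    (U : Set (Fin k → ℝ)) (hU : IsOpen U)
    (D : (Fin k → ℝ) → Submodule ℝ ((Fin n → ℝ) × (Fin n → ℝ)))
    (hD : IsModulatedDirac (Fin n → ℝ) (fun f e : Fin n → ℝ => f ⬝ᵥ e) U
      (fun x => ((D x : Submodule ℝ ((Fin n → ℝ) × (Fin n → ℝ))) : Set ((Fin n → ℝ) × (Fin n → ℝ)))))
    (E : (Fin k → ℝ) → Matrix (Fin ℓ) (Fin n) ℝ)
    (hE : ContinuousOn E U)
    (hdim : ∀ x ∈ U, ∀ y ∈ U,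
      Module.finrank ℝ
        ↥(D x ⊓ LinearMap.ker ((E x).mulVecLin ∘ₗ LinearMap.snd ℝ (Fin n → ℝ) (Fin n → ℝ))) =
      Module.finrank ℝ
        ↥(D y ⊓ LinearMap.ker ((E y).mulVecLin ∘ₗ LinearMap.snd ℝ (Fin n → ℝ) (Fin n → ℝ)))) :
    IsModulatedDirac (Fin n → ℝ) (fun f e : Fin n → ℝ => f ⬝ᵥ e) U
      (fun x => {p : (Fin n → ℝ) × (Fin n → ℝ) |
        E x *ᵥ p.2 = 0 ∧ ∃ μ : Fin ℓ → ℝ, (p.1 + (E x)ᵀ *ᵥ μ, p.2) ∈ D x}) := by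
  classical
  have hdim' : ∀ x ∈ U, ∀ y ∈ U,
      finrank ℝ ↥(D x ⊓ Ksub (E x)) = finrank ℝ ↥(D y ⊓ Ksub (E y)) := hdim
  have hDiracD : ∀ x ∈ U, (Phi n).orthogonal (D x) = D x := fun x hx =>
    (isDiracPair_iff_orth (D x)).mp (hD.1 x hx)
  constructor
  · intro x hx
    show IsDiracPair (fun f e : Fin n → ℝ => f ⬝ᵥ e)
      {p : V n | E x *ᵥ p.2 = 0 ∧ ∃ μ : Fin ℓ → ℝ, (p.1 + (E x)ᵀ *ᵥ μ, p.2) ∈ D x}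
    rw [← Dtil_set_eq (E x) (D x)]
    exact (isDiracPair_iff_orth _).mpr (dirac_Dtil (E x) (D x) (hDiracD x hx))
  · intro x₀ hx₀
    obtain ⟨Ux, hUxo, hxUx, hUxU, T, hT, hTc⟩ := hD.2 x₀ hx₀
    -- the matrix families
    set M : (Fin k → ℝ) → Matrix (Fin ℓ) (Fin n) ℝ :=
      fun y => E y * (Matrix.of fun i j => (T y (Pi.single j 1)).2 i) with hMdef
    have hMvec : ∀ y (z : Fin n → ℝ), (M y) *ᵥ z = E y *ᵥ (T y z).2 := by
      intro y z
      have hNz : (Matrix.of fun i j => ((T y) (Pi.single j 1)).2 i) *ᵥ z = (T y z).2 := by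
        funext i
        rw [show T y z = ∑ j, z j • T y (Pi.single j 1) from T_expand (T y) z,
          Prod.snd_sum, Finset.sum_apply]
        simp only [mulVec, dotProduct, Matrix.of_apply, Prod.smul_snd, Pi.smul_apply,
          smul_eq_mul]
        exact Finset.sum_congr rfl fun j _ => mul_comm _ _
      rw [hMdef, ← mulVec_mulVec, hNz]
    -- kernels have constant dimension
    have hkerdim : ∀ y ∈ Ux, finrank ℝ ↥(LinearMap.ker (M y).mulVecLin)
        = finrank ℝ ↥(D y ⊓ Ksub (E y)) := by
      intro y hy
      have hmap : Submodule.map (T y) (LinearMap.ker (M y).mulVecLin)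
          = D y ⊓ Ksub (E y) := by
        ext w
        rw [Submodule.mem_map]
        rw [Submodule.mem_inf]
        constructor
        · rintro ⟨z, hz, rfl⟩
          have hzker : M y *ᵥ z = 0 := hz
          refine ⟨?_, ?_⟩
          · have hr : Set.range ⇑(T y) = ((D y : Submodule ℝ (V n)) : Set (V n)) := (hT y hy).2
            rw [← SetLike.mem_coe, ← hr]
            exact Set.mem_range_self z
          · show E y *ᵥ (T y z).2 = 0
            rw [← hMvec]; exact hzker
        · rintro ⟨hwD, hwK⟩
          have hr : Set.range ⇑(T y) = ((D y : Submodule ℝ (V n)) : Set (V n)) := (hT y hy).2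
          have hw : w ∈ Set.range (T y) := by rw [hr]; exact hwD
          obtain ⟨z, rfl⟩ := hw
          refine ⟨z, ?_, rfl⟩
          show M y *ᵥ z = 0
          rw [hMvec]
          exact hwK
      rw [← hmap]
      exact (Submodule.equivMapOfInjective (T y) (hT y hy).1 _).finrank_eq
    -- kernel frame data at the base point
    set S₀ : Submodule ℝ (Fin n → ℝ) := LinearMap.ker (M x₀).mulVecLin with hS₀def
    set b : Basis (Fin (finrank ℝ ↥S₀)) ℝ ↥S₀ := Module.finBasis ℝ ↥S₀ with hbdef
    set W₀ : Matrix (Fin n) (Fin (finrank ℝ ↥S₀)) ℝ :=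
      Matrix.of (fun i j => ((b j : Fin n → ℝ)) i) with hW₀def
    have hW₀span : S₀ ≤ LinearMap.range W₀.mulVecLin := by
      intro z hz
      refine ⟨b.repr ⟨z, hz⟩, ?_⟩
      show W₀ *ᵥ (b.repr ⟨z, hz⟩ : Fin (finrank ℝ ↥S₀) → ℝ) = z
      have hsum := b.sum_repr ⟨z, hz⟩
      have hsum' : ∑ i, (b.repr ⟨z, hz⟩) i • ((b i : ↥S₀) : Fin n → ℝ) = z := by
        have h2 := congrArg (fun w : ↥S₀ => (w : Fin n → ℝ)) hsum
        simpa only [AddSubmonoidClass.coe_finset_sum, SetLike.val_smul] using h2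
      funext i
      have h3 := congrFun hsum' i
      rw [Finset.sum_apply] at h3
      rw [← h3]
      simp only [mulVec, dotProduct, Matrix.of_apply, Pi.smul_apply, smul_eq_mul]
      exact Finset.sum_congr rfl fun j _ => mul_comm _ _
    have hkerconst : ∀ y ∈ Ux, finrank ℝ ↥(LinearMap.ker (M y).mulVecLin) = finrank ℝ ↥S₀ := by
      intro y hy
      rw [hkerdim y hy, hdim' y (hUxU hy) x₀ (hUxU hxUx), ← hkerdim x₀ hxUx]
    set P : Matrix (Fin n) (Fin n) ℝ := W₀ * W₀ᵀ with hPdef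
    set Hm : (Fin k → ℝ) → Matrix (Fin n) (Fin n) ℝ :=
      fun y => (M y)ᵀ * M y + P with hHmdef
    have hdet₀ : (Hm x₀).det ≠ 0 := H_det_ne_zero (M x₀) W₀ hW₀span
    have hkerchar : ∀ y ∈ Ux, (Hm y).det ≠ 0 →
        LinearMap.ker (M y).mulVecLin = LinearMap.range ((Hm y)⁻¹ * P).mulVecLin :=
      fun y hy hdet => kernel_frame (M y) P W₀ hPdef (Hm y) rfl hdet (hkerconst y hy)
    -- continuity
    have hEveryE : ∀ i j, ContinuousOn (fun y => E y i j) Ux := by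
      intro i j
      have h1 : Continuous (fun A : Matrix (Fin ℓ) (Fin n) ℝ => A i j) :=
        (continuous_apply j).comp (continuous_apply (A := fun _ : Fin ℓ => Fin n → ℝ) i)
      exact h1.comp_continuousOn (hE.mono hUxU)
    have hcT2 : ∀ (z : Fin n → ℝ) (r : Fin n), ContinuousOn (fun y => (T y z).2 r) Ux := by
      intro z r
      have h1 : Continuous (fun w : V n => w.2 r) := (continuous_apply r).comp continuous_snd
      exact h1.comp_continuousOn (hTc z)
    have hcM : ∀ i j, ContinuousOn (fun y => M y i j) Ux := by
      intro i j
      have he : (fun y => M y i j)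
          = fun y => ∑ r, E y i r * (T y (Pi.single j 1)).2 r := by
        funext y; rw [hMdef]; simp [Matrix.mul_apply]
      rw [he]
      exact continuousOn_finset_sum _ fun r _ => (hEveryE i r).mul (hcT2 (Pi.single j 1) r)
    have hcHm : ContinuousOn (fun y => Hm y) Ux := by
      apply continuousOn_pi.mpr; intro i
      apply continuousOn_pi.mpr; intro j
      show ContinuousOn (fun y => Hm y i j) Ux
      have he : (fun y => Hm y i j) = fun y => (∑ r, M y r i * M y r j) + P i j := by
        funext y; rw [hHmdef]; simp [Matrix.add_apply, Matrix.mul_apply, Matrix.transpose_apply]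
      rw [he]
      exact (continuousOn_finset_sum _ fun r _ => (hcM r i).mul (hcM r j)).add continuousOn_const
    have hcdet : ContinuousOn (fun y => (Hm y).det) Ux :=
      (continuous_id.matrix_det).comp_continuousOn hcHm
    set Ω : Set (Fin k → ℝ) := Ux ∩ (fun y => (Hm y).det) ⁻¹' {(0:ℝ)}ᶜ with hΩdef
    have hΩo : IsOpen Ω := hcdet.isOpen_inter_preimage hUxo isOpen_compl_singleton
    have hx₀Ω : x₀ ∈ Ω := ⟨hxUx, hdet₀⟩
    have hΩUx : Ω ⊆ Ux := Set.inter_subset_left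
    have hΩdet : ∀ y ∈ Ω, (Hm y).det ≠ 0 := fun y hy => hy.2
    have hcHinv : ∀ i j, ContinuousOn (fun y => (Hm y)⁻¹ i j) Ω := by
      intro i j
      have hadj : ContinuousOn (fun y => (Hm y).adjugate i j) Ω := by
        have h1 : Continuous (fun A : Matrix (Fin n) (Fin n) ℝ => A.adjugate i j) :=
          ((continuous_apply j).comp (continuous_apply (A := fun _ : Fin n => Fin n → ℝ) i)).comp
            (Continuous.matrix_adjugate continuous_id)
        exact h1.comp_continuousOn (hcHm.mono hΩUx)
      have hg : ContinuousOn (fun y => ((Hm y).det)⁻¹ * (Hm y).adjugate i j) Ω :=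
        ((hcdet.mono hΩUx).inv₀ hΩdet).mul hadj
      apply ContinuousOn.congr hg
      intro y hy
      show (Hm y)⁻¹ i j = ((Hm y).det)⁻¹ * (Hm y).adjugate i j
      rw [Matrix.inv_def, Matrix.smul_apply, Ring.inverse_eq_inv, smul_eq_mul]
    -- dimension of the constrained structure
    have hfinDtil : ∀ y ∈ Ux, finrank ℝ ↥(Dtil (D y) (E y)) = n := fun y hy =>
      finrank_dirac _ (dirac_Dtil (E y) (D y) (hDiracD y (hUxU hy)))
    set bD : Basis (Fin n) ℝ ↥(Dtil (D x₀) (E x₀)) :=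
      Module.finBasisOfFinrankEq ℝ _ (hfinDtil x₀ hxUx) with hbDdef
    have hdecomp : ∀ i : Fin n, ∃ (u : Fin n → ℝ) (μ : Fin ℓ → ℝ),
        ((bD i : V n)) = T x₀ (((Hm x₀)⁻¹ * P) *ᵥ u) + ((E x₀)ᵀ *ᵥ μ, 0) := by
      intro i
      have hmem : (bD i : V n) ∈ (D x₀ ⊓ Ksub (E x₀)) ⊔ Fsub (E x₀) := by
        rw [← Dtil_eq_sup]; exact (bD i).2
      obtain ⟨d, hd, f, hf, hdf⟩ := Submodule.mem_sup.mp hmem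
      obtain ⟨μ', hμ⟩ := (mem_Fsub (E x₀)).mp hf
      have hdD : d ∈ D x₀ := hd.1
      have hr : Set.range ⇑(T x₀) = ((D x₀ : Submodule ℝ (V n)) : Set (V n)) := (hT x₀ hxUx).2
      have hdr : d ∈ Set.range ⇑(T x₀) := by rw [hr]; exact hdD
      obtain ⟨z, hz⟩ := hdr
      have hzker : z ∈ LinearMap.ker (M x₀).mulVecLin := by
        show M x₀ *ᵥ z = 0
        rw [hMvec, hz]
        exact hd.2
      rw [hkerchar x₀ hxUx hdet₀] at hzker
      obtain ⟨u', hu'⟩ := hzker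
      refine ⟨u', μ', ?_⟩
      rw [show ((Hm x₀)⁻¹ * P) *ᵥ u' = z from hu', hz, hμ]
      exact hdf.symm
    choose u μ hu using hdecomp
    set v : Fin n → (Fin k → ℝ) → V n :=
      fun i y => T y (((Hm y)⁻¹ * P) *ᵥ u i) + ((E y)ᵀ *ᵥ μ i, 0) with hvdef
    have hv₀ : ∀ i, v i x₀ = (bD i : V n) := fun i => (hu i).symm
    have hvmem : ∀ y ∈ Ω, ∀ i, v i y ∈ Dtil (D y) (E y) := by
      intro y hy i
      have hyUx := hΩUx hy
      have harg : ((Hm y)⁻¹ * P) *ᵥ u i ∈ LinearMap.ker (M y).mulVecLin := by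
        rw [hkerchar y hyUx (hΩdet y hy)]
        exact ⟨u i, rfl⟩
      have h1 : T y (((Hm y)⁻¹ * P) *ᵥ u i) ∈ D y ⊓ Ksub (E y) := by
        rw [Submodule.mem_inf]
        constructor
        · have hr : Set.range ⇑(T y) = ((D y : Submodule ℝ (V n)) : Set (V n)) := (hT y hyUx).2
          rw [← SetLike.mem_coe, ← hr]; exact Set.mem_range_self _
        · show E y *ᵥ (T y (((Hm y)⁻¹ * P) *ᵥ u i)).2 = 0
          rw [← hMvec]; exact harg
      have h2 : (((E y)ᵀ *ᵥ μ i, (0:Fin n → ℝ)) : V n) ∈ Fsub (E y) :=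
        (mem_Fsub (E y)).mpr ⟨μ i, rfl⟩
      rw [Dtil_eq_sup]
      exact Submodule.add_mem _ (Submodule.mem_sup_left h1) (Submodule.mem_sup_right h2)
    have hcv : ∀ i, ContinuousOn (fun y => v i y) Ω := by
      intro i
      have harg : ∀ j, ContinuousOn (fun y => (((Hm y)⁻¹ * P) *ᵥ u i) j) Ω := by
        intro j
        have he : (fun y => (((Hm y)⁻¹ * P) *ᵥ u i) j)
            = fun y => ∑ s, (∑ r, (Hm y)⁻¹ j r * P r s) * u i s := by
          funext y; simp [mulVec, dotProduct, Matrix.mul_apply]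
        rw [he]
        exact continuousOn_finset_sum _ fun s _ =>
          (continuousOn_finset_sum _ fun r _ => (hcHinv j r).mul continuousOn_const).mul
            continuousOn_const
      have hcTpart : ContinuousOn (fun y => T y (((Hm y)⁻¹ * P) *ᵥ u i)) Ω := by
        have he : (fun y => T y (((Hm y)⁻¹ * P) *ᵥ u i))
            = fun y => ∑ j, (((Hm y)⁻¹ * P) *ᵥ u i) j • T y (Pi.single j 1) := by
          funext y; exact T_expand (T y) _
        rw [he]
        exact continuousOn_finset_sum _ fun j _ =>
          (harg j).smul ((hTc (Pi.single j 1)).mono hΩUx)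
      have hcF : ContinuousOn (fun y => ((((E y)ᵀ *ᵥ μ i : Fin n → ℝ), (0:Fin n → ℝ)) : V n)) Ω := by
        apply ContinuousOn.prodMk
        · apply continuousOn_pi.mpr; intro r
          have he : (fun y => ((E y)ᵀ *ᵥ μ i) r) = fun y => ∑ s, E y s r * μ i s := by
            funext y; simp [mulVec, dotProduct, Matrix.transpose_apply]
          show ContinuousOn (fun y => ((E y)ᵀ *ᵥ μ i) r) Ω
          rw [he]
          exact continuousOn_finset_sum _ fun s _ =>
            ((hEveryE s r).mono hΩUx).mul continuousOn_const
        · exact continuousOn_const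
      exact hcTpart.add hcF
    have hcgram : ContinuousOn (fun y => gram (fun i => v i y)) Ω := by
      have c1 : ∀ (i' : Fin n) (r : Fin n), ContinuousOn (fun y => (v i' y).1 r) Ω := fun i' r =>
        ((continuous_apply r).comp continuous_fst).comp_continuousOn (hcv i')
      have c2 : ∀ (i' : Fin n) (r : Fin n), ContinuousOn (fun y => (v i' y).2 r) Ω := fun i' r =>
        ((continuous_apply r).comp continuous_snd).comp_continuousOn (hcv i')
      apply continuousOn_pi.mpr; intro i
      apply continuousOn_pi.mpr; intro j
      show ContinuousOn (fun y => gram (fun i' => v i' y) i j) Ω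
      have he : (fun y => gram (fun i' => v i' y) i j)
          = fun y => (∑ r, (v i y).1 r * (v j y).1 r) + ∑ r, (v i y).2 r * (v j y).2 r := by
        funext y; rfl
      rw [he]
      exact (continuousOn_finset_sum _ fun r _ => (c1 i r).mul (c1 j r)).add
        (continuousOn_finset_sum _ fun r _ => (c2 i r).mul (c2 j r))
    have hcgdet : ContinuousOn (fun y => (gram (fun i => v i y)).det) Ω :=
      (continuous_id.matrix_det).comp_continuousOn hcgram
    have hg₀ : (gram (fun i => v i x₀)).det ≠ 0 := by
      have hbind : LinearIndependent ℝ (fun i => (bD i : V n)) :=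
        bD.linearIndependent.map' (Submodule.subtype _) (Submodule.ker_subtype _)
      have he : (fun i => v i x₀) = fun i => (bD i : V n) := funext hv₀
      rw [he]
      exact (gram_det_ne_zero_iff _).mpr hbind
    set Ω' : Set (Fin k → ℝ) := Ω ∩ (fun y => (gram (fun i => v i y)).det) ⁻¹' {(0:ℝ)}ᶜ
      with hΩ'def
    have hΩ'o : IsOpen Ω' := hcgdet.isOpen_inter_preimage hΩo isOpen_compl_singleton
    have hx₀Ω' : x₀ ∈ Ω' := ⟨hx₀Ω, hg₀⟩
    have hΩ'Ω : Ω' ⊆ Ω := Set.inter_subset_left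
    refine ⟨Ω', hΩ'o, hx₀Ω', fun y hy => hUxU (hΩUx (hΩ'Ω hy)),
      (fun y => ∑ i, (LinearMap.proj i : (Fin n → ℝ) →ₗ[ℝ] ℝ).smulRight (v i y)), ?_, ?_⟩
    · intro y hy
      have hyΩ := hΩ'Ω hy
      have hyUx := hΩUx hyΩ
      have happly : ∀ c : Fin n → ℝ, (∑ i, (LinearMap.proj i : (Fin n → ℝ) →ₗ[ℝ] ℝ).smulRight (v i y)) c
          = ∑ i, c i • v i y := by
        intro c
        simp [LinearMap.sum_apply, LinearMap.smulRight_apply, LinearMap.proj_apply]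
      have hind : LinearIndependent ℝ (fun i => v i y) := (gram_det_ne_zero_iff _).mp hy.2
      have hinj : Function.Injective ⇑(∑ i, (LinearMap.proj i : (Fin n → ℝ) →ₗ[ℝ] ℝ).smulRight (v i y)) := by
        apply LinearMap.ker_eq_bot.mp
        rw [eq_bot_iff]
        intro c hc
        have hc0 : ∑ i, c i • v i y = 0 := by
          rw [← happly c]; exact hc
        have hzero := Fintype.linearIndependent_iff.mp hind c hc0
        exact (Submodule.mem_bot ℝ).mpr (funext hzero)
      have hsub : LinearMap.range (∑ i, (LinearMap.proj i : (Fin n → ℝ) →ₗ[ℝ] ℝ).smulRight (v i y))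
          = Dtil (D y) (E y) := by
        apply Submodule.eq_of_le_of_finrank_le
        · rintro w ⟨c, rfl⟩
          rw [happly c]
          exact Submodule.sum_mem _ fun i _ => Submodule.smul_mem _ _ (hvmem y hyΩ i)
        · rw [LinearMap.finrank_range_of_inj hinj, hfinDtil y hyUx, Module.finrank_fin_fun]
      refine ⟨hinj, ?_⟩
      show Set.range ⇑(∑ i, (LinearMap.proj i : (Fin n → ℝ) →ₗ[ℝ] ℝ).smulRight (v i y))
          = {p : V n | E y *ᵥ p.2 = 0 ∧ ∃ μ' : Fin ℓ → ℝ, (p.1 + (E y)ᵀ *ᵥ μ', p.2) ∈ D y}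
      rw [← Dtil_set_eq (E y) (D y), ← hsub]
      exact (LinearMap.coe_range _).symm
    · intro c
      have he : (fun y => (∑ i, (LinearMap.proj i : (Fin n → ℝ) →ₗ[ℝ] ℝ).smulRight (v i y)) c)
          = fun y => ∑ i, c i • v i y := by
        funext y
        simp [LinearMap.sum_apply, LinearMap.smulRight_apply, LinearMap.proj_apply]
      rw [he]
      exact continuousOn_finset_sum _ fun i _ =>
        ((hcv i).mono hΩ'Ω).const_smul (c i)
end

section
/- Let D := {((a,0),(0,b)) : a, b ∈ ℝ} ⊆ ℝ² × ℝ² and, for x ∈ ℝ, let E(x) := [1, x] ∈ ℝ^{1×2} and D̃_x := {(f,e) ∈ ℝ² × ℝ² : E(x) e = 0 and ∃ μ ∈ ℝ with (f + E(x)ᵀμ, e) ∈ D}. Then: (i) D̃_0 = D; (ii) D̃_x = ℝ² × {0} for every x ≠ 0; and (iii) for every neighborhood U₀ ⊆ ℝ of 0 and every family (T_y)_{y∈U₀} of injective linear maps T_y : ℝ² → ℝ² × ℝ² with range(T_y) = D̃_y, there exists z ∈ ℝ² such that the map y ↦ T_y z is not continuous at 0. In particular, (D̃_x)_{x∈ℝ}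 is not a modulated Dirac structure. -/
open Matrix

/-- The constant Dirac structure `D = {((a,0),(0,b)) : a,b ∈ ℝ} ⊆ ℝ² × ℝ²`. -/
def D₀ : Set ((Fin 2 → ℝ) × (Fin 2 → ℝ)) :=
  {p | ∃ a b : ℝ, p = (![a, 0], ![0, b])}

/-- The matrix `E(x) = [1, x] ∈ ℝ^{1×2}`. -/
def Emat (x : ℝ) : Matrix (Fin 1) (Fin 2) ℝ := Matrix.of ![![1, x]]

/-- The constrained family `D̃_x = {(f,e) : E(x) e = 0, ∃ μ, (f + E(x)ᵀμ, e) ∈ D}`. -/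
def Dtilde (x : ℝ) : Set ((Fin 2 → ℝ) × (Fin 2 → ℝ)) :=
  {p | Emat x *ᵥ p.2 = 0 ∧ ∃ μ : Fin 1 → ℝ, (p.1 + (Emat x)ᵀ *ᵥ μ, p.2) ∈ D₀}


open Filter Topology

lemma mem_D₀_iff (p : (Fin 2 → ℝ) × (Fin 2 → ℝ)) :
    p ∈ D₀ ↔ p.1 1 = 0 ∧ p.2 0 = 0 := by
  constructor
  · rintro ⟨a, b, rfl⟩; simp
  · rintro ⟨h1, h2⟩
    refine ⟨p.1 0, p.2 1, ?_⟩
    refine Prod.ext ?_ ?_ <;> (funext i; fin_cases i <;> simp [h1, h2])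

lemma mulVec_Emat (x : ℝ) (e : Fin 2 → ℝ) :
    Emat x *ᵥ e = fun _ => e 0 + x * e 1 := by
  funext i
  simp [Emat, Matrix.mulVec, dotProduct, Fin.sum_univ_two]

lemma transpose_mulVec_Emat (x : ℝ) (μ : Fin 1 → ℝ) :
    (Emat x)ᵀ *ᵥ μ = ![μ 0, x * μ 0] := by
  funext i; fin_cases i <;>
    simp [Emat, Matrix.mulVec, dotProduct, Fin.sum_univ_one, Matrix.transpose_apply]

lemma mem_Dtilde_iff (x : ℝ) (p : (Fin 2 → ℝ) × (Fin 2 → ℝ)) :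
    p ∈ Dtilde x ↔ (p.2 0 + x * p.2 1 = 0) ∧ (∃ μ : ℝ, p.1 1 + x * μ = 0) ∧ p.2 0 = 0 := by
  constructor
  · rintro ⟨h1, μ, hμ⟩
    rw [mulVec_Emat] at h1
    rw [transpose_mulVec_Emat] at hμ
    rw [mem_D₀_iff] at hμ
    obtain ⟨ha, hb⟩ := hμ
    simp only [Pi.add_apply] at ha
    refine ⟨congrFun h1 0, ⟨μ 0, by simpa using ha⟩, hb⟩
  · rintro ⟨h1, ⟨μ, hμ⟩, h2⟩
    refine ⟨by rw [mulVec_Emat]; funext i; simpa using h1, ![μ], ?_⟩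
    rw [transpose_mulVec_Emat, mem_D₀_iff]
    exact ⟨by simpa using hμ, h2⟩

lemma Dtilde_zero : Dtilde 0 = D₀ := by
  ext p
  rw [mem_Dtilde_iff, mem_D₀_iff]
  constructor
  · rintro ⟨h1, ⟨μ, hμ⟩, h2⟩
    exact ⟨by simpa using hμ, h2⟩
  · rintro ⟨h1, h2⟩
    exact ⟨by simpa using h2, ⟨0, by simpa using h1⟩, h2⟩

lemma Dtilde_ne_zero (x : ℝ) (hx : x ≠ 0) :
    Dtilde x = {p : (Fin 2 → ℝ) × (Fin 2 → ℝ) | p.2 = 0} := by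
  ext p
  rw [mem_Dtilde_iff]
  constructor
  · rintro ⟨h1, _, h2⟩
    have h3 : p.2 1 = 0 := by
      have : x * p.2 1 = 0 := by linarith [h1, h2]
      exact (mul_eq_zero.1 this).resolve_left hx
    have : p.2 = 0 := by funext i; fin_cases i <;> simp [h2, h3]
    exact this
  · intro h
    have h2 : p.2 = 0 := h
    refine ⟨by simp [h2], ⟨-p.1 1 / x, by field_simp; ring⟩, by simp [h2]⟩

/-- Counterexample: without the constant-dimension assumption, the constrained family
`(D̃_x)_{x∈ℝ}` fails to be a modulated Dirac structure: `D̃_0 = D`, `D̃_x = ℝ² × {0}` for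
`x ≠ 0`, no local trivialization around `0` is continuous, and the family is not a
modulated Dirac structure. -/
theorem not_modulated_counterexample :
    Dtilde 0 = D₀ ∧
    (∀ x : ℝ, x ≠ 0 → Dtilde x = {p : (Fin 2 → ℝ) × (Fin 2 → ℝ) | p.2 = 0}) ∧
    (∀ U₀ : Set ℝ, IsOpen U₀ → (0 : ℝ) ∈ U₀ →
      ∀ T : ℝ → ((Fin 2 → ℝ) →ₗ[ℝ] ((Fin 2 → ℝ) × (Fin 2 → ℝ))),
        (∀ y ∈ U₀, Function.Injective (T y) ∧ Set.range (T y) = Dtilde y) →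
        ∃ z : Fin 2 → ℝ, ¬ ContinuousWithinAt (fun y => T y z) U₀ 0) ∧
    ¬ IsModulatedDirac (Fin 2 → ℝ) (fun f e : Fin 2 → ℝ => f ⬝ᵥ e)
        (Set.univ : Set ℝ) Dtilde := by

  have part1 : Dtilde 0 = D₀ := Dtilde_zero
  have part2 : ∀ x : ℝ, x ≠ 0 → Dtilde x = {p : (Fin 2 → ℝ) × (Fin 2 → ℝ) | p.2 = 0} :=
    Dtilde_ne_zero
  have part3 : ∀ U₀ : Set ℝ, IsOpen U₀ → (0 : ℝ) ∈ U₀ →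
      ∀ T : ℝ → ((Fin 2 → ℝ) →ₗ[ℝ] ((Fin 2 → ℝ) × (Fin 2 → ℝ))),
        (∀ y ∈ U₀, Function.Injective (T y) ∧ Set.range (T y) = Dtilde y) →
        ∃ z : Fin 2 → ℝ, ¬ ContinuousWithinAt (fun y => T y z) U₀ 0 := by
    intro U₀ hU hU0 T hT
    obtain ⟨hinj, hrange⟩ := hT 0 hU0
    have hmem : ((![0,0], ![0,1]) : (Fin 2 → ℝ) × (Fin 2 → ℝ)) ∈ Dtilde 0 := by
      rw [part1]; exact ⟨0, 1, rfl⟩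
    rw [← hrange] at hmem
    obtain ⟨z, hz⟩ := hmem
    refine ⟨z, fun hc => ?_⟩
    have cont : Continuous (fun p : (Fin 2 → ℝ) × (Fin 2 → ℝ) => p.2 1) :=
      (continuous_apply 1).comp continuous_snd
    have hc2 : Tendsto (fun y => (T y z).2 1) (nhdsWithin 0 U₀) (nhds 1) := by
      have h := (cont.tendsto (T 0 z)).comp hc.tendsto
      have : (T 0 z).2 1 = 1 := by rw [hz]; simp
      rw [this] at h
      exact h
    have hU' : U₀ ∈ nhds (0 : ℝ) := hU.mem_nhds hU0
    have hc3 : Tendsto (fun y => (T y z).2 1) (nhdsWithin 0 {(0:ℝ)}ᶜ) (nhds 1) := by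
      rw [nhdsWithin_eq_nhds.2 hU'] at hc2
      exact hc2.mono_left nhdsWithin_le_nhds
    have hzero : (fun y : ℝ => (T y z).2 1) =ᶠ[nhdsWithin 0 {(0:ℝ)}ᶜ] fun _ => 0 := by
      filter_upwards [mem_nhdsWithin_of_mem_nhds hU', self_mem_nhdsWithin] with y hyU hyne
      have : T y z ∈ Dtilde y := (hT y hyU).2 ▸ Set.mem_range_self z
      rw [part2 y hyne] at this
      have h2 : (T y z).2 = 0 := this
      simp [h2]
    have hc4 : Tendsto (fun _ : ℝ => (0:ℝ)) (nhdsWithin 0 {(0:ℝ)}ᶜ) (nhds 1) :=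
      hc3.congr' hzero
    exact one_ne_zero (tendsto_nhds_unique hc4 tendsto_const_nhds)
  refine ⟨part1, part2, part3, ?_⟩
  rintro ⟨-, hloc⟩
  obtain ⟨Ux, hopen, h0, -, T, hT, hcont⟩ := hloc 0 (Set.mem_univ 0)
  obtain ⟨z, hz⟩ := part3 Ux hopen h0 T hT
  exact hz ((hcont z) 0 h0)
end
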